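/- arXiv:1412.1540 — 3 statements merged into one kernel-verified Lean document; each statement's English description precedes it below -/
import Mathlib

section
/- Let x(t) be a nontrivial solution of the linear cyclic negative feedback system. Then the set {t ∈ ℝ : x(t) ∉ 𝒩} consists of isolated points, and N(x(·)) is nonincreasing along the solution: whenever s < t with x(s) ∈ 𝒩 and x(t) ∈ 𝒩, one has N(x(t)) ≤ N(x(s)). -/
open Filter Topology

/-- δ₁ = −1 (index `0` in our 0-based indexing), δᵢ = 1 for the other indices. -/
def cyclicDelta (n : ℕ) [NeZero n] (i : Fin n) : ℝ := if i = 0 then -1 else 1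

/-- The set Λ of vectors with all coordinates nonzero. -/
def cyclicLambda (n : ℕ) [NeZero n] : Set (Fin n → ℝ) := {x | ∀ i, x i ≠ 0}

/-- The integer valued Lyapunov function `N(x) = card {i : δᵢ xᵢ x_{i−1} < 0}`
(cyclic indices, `x₀ = xₙ`). -/
noncomputable def cyclicN (n : ℕ) [NeZero n] (x : Fin n → ℝ) : ℕ :=
  Nat.card {i : Fin n // cyclicDelta n i * x i * x (i - 1) < 0}

/-- `N_m(x)`: the minimum of `N` over `U ∩ Λ` for all sufficiently small
neighborhoods `U` of `x`, i.e. the least value of `N` attained in every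
neighborhood of `x` within `Λ`. -/
noncomputable def cyclicNm (n : ℕ) [NeZero n] (x : Fin n → ℝ) : ℕ :=
  sInf {k | ∃ᶠ y in 𝓝[cyclicLambda n] x, cyclicN n y = k}

/-- `N_M(x)`: the maximum of `N` over `U ∩ Λ` for all sufficiently small
neighborhoods `U` of `x`. -/
noncomputable def cyclicNM (n : ℕ) [NeZero n] (x : Fin n → ℝ) : ℕ :=
  sSup {k | ∃ᶠ y in 𝓝[cyclicLambda n] x, cyclicN n y = k}

/-- The set 𝒩 on which `N` extends continuously. -/
def cyclicGood (n : ℕ) [NeZero n] : Set (Fin n → ℝ) :=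
  {x | cyclicNm n x = cyclicNM n x}

/-- ñ = n if n is odd, n − 1 if n is even. -/
def ntilde (n : ℕ) : ℕ := if n % 2 = 1 then n else n - 1

/-- A linear cyclic negative feedback system: coefficients `diag t i = a_{ii}(t)`
and `sub t i = a_{i,i−1}(t)` (cyclically, `sub t 0 = a_{1,n}(t)`), all continuous,
with `a_{1,n}(t) < 0` and `a_{i,i−1}(t) > 0` for `i ≠ 1`. -/
structure LinCNF (n : ℕ) [NeZero n] where
  diag : ℝ → Fin n → ℝ
  sub : ℝ → Fin n → ℝ
  cont_diag : ∀ i, Continuous fun t => diag t i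
  cont_sub : ∀ i, Continuous fun t => sub t i
  sub_neg : ∀ t, sub t 0 < 0
  sub_pos : ∀ t (i : Fin n), i ≠ 0 → 0 < sub t i

/-- `x` is a solution of the linear system `ẋᵢ = a_{ii}(t)xᵢ + a_{i,i−1}(t)x_{i−1}`. -/
def LinCNF.IsSolution {n : ℕ} [NeZero n] (S : LinCNF n) (x : ℝ → Fin n → ℝ) : Prop :=
  ∀ (t : ℝ) (i : Fin n),
    HasDerivAt (fun s => x s i) (S.diag t i * x t i + S.sub t i * x t (i - 1)) t

/-- `Φ` is the fundamental (matrix) solution, `Φ(0) = I`. -/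
def LinCNF.IsFundamental {n : ℕ} [NeZero n] (S : LinCNF n)
    (Φ : ℝ → (Fin n → ℝ) →ₗ[ℝ] (Fin n → ℝ)) : Prop :=
  Φ 0 = LinearMap.id ∧ ∀ x₀ : Fin n → ℝ, S.IsSolution fun t => Φ t x₀

/-- The cone `K_h = {0} ∪ {x : N_M(x) ≤ 2h − 1}`. -/
def Kcone (n : ℕ) [NeZero n] (h : ℕ) : Set (Fin n → ℝ) :=
  {0} ∪ {x | cyclicNM n x ≤ 2 * h - 1}

/-- The complementary cone `K^h = {0} ∪ {x : N_m(x) > 2h − 1}`. -/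
def KconeUp (n : ℕ) [NeZero n] (h : ℕ) : Set (Fin n → ℝ) :=
  {0} ∪ {x | 2 * h - 1 < cyclicNm n x}

namespace Aux
open Set

variable {n : ℕ} [NeZero n]

lemma cyclicDelta_cases (i : Fin n) : cyclicDelta n i = 1 ∨ cyclicDelta n i = -1 := by
  unfold cyclicDelta; split
  · exact Or.inr rfl
  · exact Or.inl rfl

lemma cyclicDelta_sq (i : Fin n) : cyclicDelta n i * cyclicDelta n i = 1 := by
  rcases cyclicDelta_cases i with h | h <;> rw [h] <;> norm_num

open Classical in
lemma cyclicN_eq_card (y : Fin n → ℝ) :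
    cyclicN n y
      = (Finset.univ.filter fun i => cyclicDelta n i * y i * y (i - 1) < 0).card := by
  rw [cyclicN, Nat.card_eq_fintype_card, Fintype.card_subtype]

lemma cyclicN_le (y : Fin n → ℝ) : cyclicN n y ≤ n := by
  classical
  rw [cyclicN_eq_card]
  calc (Finset.univ.filter fun i => cyclicDelta n i * y i * y (i - 1) < 0).card
      ≤ Finset.univ.card := Finset.card_filter_le _ _
    _ = n := by simp

lemma lt_iff_of_mul_pos {a b : ℝ} (h : 0 < a * b) : a < 0 ↔ b < 0 := by
  rcases mul_pos_iff.1 h with ⟨ha, hb⟩ | ⟨ha, hb⟩ <;>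
    constructor <;> intro h' <;> linarith

lemma cyclicN_congr {y z : Fin n → ℝ} (h : ∀ i, 0 < y i * z i) :
    cyclicN n y = cyclicN n z := by
  classical
  rw [cyclicN_eq_card, cyclicN_eq_card]
  congr 1
  apply Finset.filter_congr
  intro i _
  have hd := cyclicDelta_sq i
  have h1 := h i
  have h2 := h (i - 1)
  have key : 0 < (cyclicDelta n i * y i * y (i - 1)) * (cyclicDelta n i * z i * z (i - 1)) := by
    have e : (cyclicDelta n i * y i * y (i - 1)) * (cyclicDelta n i * z i * z (i - 1))
        = (cyclicDelta n i * cyclicDelta n i) * ((y i * z i) * (y (i - 1) * z (i - 1))) := by ring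
    rw [e, hd, one_mul]
    exact mul_pos h1 h2
  exact (lt_iff_of_mul_pos key)


lemma comb (y z : Fin n → ℝ) (Z : Fin n → Prop)
    (hy : ∀ i, Z i → 0 < cyclicDelta n i * y i * y (i - 1))
    (hz : ∀ i, Z i → cyclicDelta n i * z i * z (i - 1) < 0)
    (hb : ∀ i, ¬ Z i → ¬ Z (i - 1) →
      (cyclicDelta n i * y i * y (i - 1) < 0 ↔ cyclicDelta n i * z i * z (i - 1) < 0)) :
    cyclicN n y ≤ cyclicN n z := by
  classical
  rw [cyclicN_eq_card, cyclicN_eq_card]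
  set Ay := Finset.univ.filter fun i => cyclicDelta n i * y i * y (i - 1) < 0 with hAy
  set Az := Finset.univ.filter fun i => cyclicDelta n i * z i * z (i - 1) < 0 with hAz
  set ZF := Finset.univ.filter Z with hZF
  set B := Finset.univ.filter (fun i => ¬ Z i ∧ ¬ Z (i - 1)) with hB
  set C := Finset.univ.filter (fun i => ¬ Z i ∧ Z (i - 1)) with hC
  have hsub : Ay ⊆ (Ay ∩ B) ∪ (Ay ∩ C) := by
    intro i hi
    have hiy : cyclicDelta n i * y i * y (i - 1) < 0 := (Finset.mem_filter.1 hi).2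
    have hZi : ¬ Z i := fun h => absurd (hy i h) (not_lt.2 hiy.le)
    by_cases hZ' : Z (i - 1)
    · exact Finset.mem_union_right _ (Finset.mem_inter.2 ⟨hi, Finset.mem_filter.2 ⟨Finset.mem_univ _, hZi, hZ'⟩⟩)
    · exact Finset.mem_union_left _ (Finset.mem_inter.2 ⟨hi, Finset.mem_filter.2 ⟨Finset.mem_univ _, hZi, hZ'⟩⟩)
  have hAB : Ay ∩ B = Az ∩ B := by
    ext i
    simp only [hAy, hAz, hB, Finset.mem_inter, Finset.mem_filter, Finset.mem_univ, true_and]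
    constructor
    · rintro ⟨h1, h2, h3⟩; exact ⟨(hb i h2 h3).1 h1, h2, h3⟩
    · rintro ⟨h1, h2, h3⟩; exact ⟨(hb i h2 h3).2 h1, h2, h3⟩
  have hCcard : (Ay ∩ C).card ≤ ZF.card := by
    apply Finset.card_le_card_of_injOn (fun i => i - 1)
    · intro i hi
      have := (Finset.mem_filter.1 (Finset.mem_inter.1 hi).2).2.2
      exact Finset.mem_filter.2 ⟨Finset.mem_univ _, this⟩
    · intro i _ j _ hij
      have hij' : i - 1 = j - 1 := hij
      have : i - 1 + 1 = j - 1 + 1 := by rw [hij']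
      simpa [sub_add_cancel] using this
  have hdisj : Disjoint (Az ∩ B) ZF := by
    rw [Finset.disjoint_left]
    intro i hi hi'
    exact (Finset.mem_filter.1 (Finset.mem_inter.1 hi).2).2.1 (Finset.mem_filter.1 hi').2
  have hZsub : ZF ⊆ Az := by
    intro i hi
    exact Finset.mem_filter.2 ⟨Finset.mem_univ _, hz i (Finset.mem_filter.1 hi).2⟩
  calc Ay.card ≤ ((Ay ∩ B) ∪ (Ay ∩ C)).card := Finset.card_le_card hsub
    _ ≤ (Ay ∩ B).card + (Ay ∩ C).card := Finset.card_union_le _ _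
    _ ≤ (Az ∩ B).card + ZF.card := by rw [hAB]; exact Nat.add_le_add le_rfl hCcard
    _ = ((Az ∩ B) ∪ ZF).card := (Finset.card_union_of_disjoint hdisj).symm
    _ ≤ Az.card := Finset.card_le_card (Finset.union_subset (Finset.inter_subset_left) hZsub)

lemma isOpen_lambda : IsOpen (cyclicLambda n) := by
  have : cyclicLambda n = ⋂ i, (fun y : Fin n → ℝ => y i) ⁻¹' ({0}ᶜ) := by
    ext y; simp [cyclicLambda]
  rw [this]
  exact isOpen_iInter_of_finite fun i =>
    (isOpen_compl_singleton).preimage (continuous_apply i)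

lemma eventually_cyclicN_eq {y : Fin n → ℝ} (hy : y ∈ cyclicLambda n) :
    ∀ᶠ z in 𝓝 y, cyclicN n z = cyclicN n y := by
  have hU : IsOpen {z : Fin n → ℝ | ∀ i, 0 < z i * y i} := by
    have : {z : Fin n → ℝ | ∀ i, 0 < z i * y i}
        = ⋂ i, (fun z : Fin n → ℝ => z i * y i) ⁻¹' (Ioi 0) := by
      ext z; simp [Set.mem_iInter]
    rw [this]
    exact isOpen_iInter_of_finite fun i =>
      isOpen_Ioi.preimage ((continuous_apply i).mul continuous_const)
  have hyU : y ∈ {z : Fin n → ℝ | ∀ i, 0 < z i * y i} := fun i => mul_self_pos.2 (hy i)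
  filter_upwards [hU.mem_nhds hyU] with z hz
  exact cyclicN_congr hz

lemma freq_bounds {x₀ : Fin n → ℝ} {k : ℕ}
    (h : ∃ᶠ y in 𝓝[cyclicLambda n] x₀, cyclicN n y = k) :
    cyclicNm n x₀ ≤ k ∧ k ≤ cyclicNM n x₀ := by
  constructor
  · exact Nat.sInf_le h
  · apply le_csSup
    · refine ⟨n, fun m hm => ?_⟩
      by_contra hmn
      exact hm (Eventually.of_forall fun y hy => hmn (hy ▸ cyclicN_le y))
    · exact h

lemma good_eq {x₀ : Fin n → ℝ} (hg : x₀ ∈ cyclicGood n) {k : ℕ}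
    (h : ∃ᶠ y in 𝓝[cyclicLambda n] x₀, cyclicN n y = k) :
    cyclicNm n x₀ = k := by
  obtain ⟨h1, h2⟩ := freq_bounds h
  have : cyclicNm n x₀ = cyclicNM n x₀ := hg
  omega

lemma lambda_good {y : Fin n → ℝ} (hy : y ∈ cyclicLambda n) :
    y ∈ cyclicGood n ∧ cyclicNm n y = cyclicN n y := by
  haveI : (𝓝[cyclicLambda n] y).NeBot := nhdsWithin_neBot_of_mem hy
  have hev : ∀ᶠ z in 𝓝[cyclicLambda n] y, cyclicN n z = cyclicN n y :=
    (eventually_cyclicN_eq hy).filter_mono nhdsWithin_le_nhds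
  have hSet : {k | ∃ᶠ z in 𝓝[cyclicLambda n] y, cyclicN n z = k} = {cyclicN n y} := by
    ext k
    simp only [Set.mem_setOf_eq, Set.mem_singleton_iff]
    constructor
    · intro hk
      obtain ⟨z, hz1, hz2⟩ := (hk.and_eventually hev).exists
      omega
    · rintro rfl
      exact hev.frequently
  have hm : cyclicNm n y = cyclicN n y := by rw [cyclicNm, hSet, csInf_singleton]
  have hM : cyclicNM n y = cyclicN n y := by rw [cyclicNM, hSet, csSup_singleton]
  exact ⟨by rw [cyclicGood, Set.mem_setOf_eq, hm, hM], hm⟩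


namespace Aux2
variable {n : ℕ} [NeZero n]

lemma gron_zero {f f' : ℝ → Fin n → ℝ} {K a b : ℝ} (hab : a ≤ b)
    (hd : ∀ t, HasDerivAt f (f' t) t)
    (hK : ∀ t ∈ Icc a b, ‖f' t‖ ≤ K * ‖f t‖) (h0 : f a = 0) : f b = 0 := by
  have hc : ContinuousOn f (Icc a b) := fun t _ => (hd t).continuousAt.continuousWithinAt
  have hb := norm_le_gronwallBound_of_norm_deriv_right_le (δ := 0) (K := K) (ε := 0) hc
    (fun t _ => (hd t).hasDerivWithinAt)
    (by simp [h0])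
    (fun t ht => by simpa using hK t (Set.Ico_subset_Icc_self ht))
    b (right_mem_Icc.2 hab)
  rw [gronwallBound_ε0_δ0] at hb
  exact norm_le_zero_iff.1 hb

variable (S : LinCNF n) (x : ℝ → Fin n → ℝ)

lemma coef_bound (a b : ℝ) :
    ∃ K : ℝ, 0 ≤ K ∧ ∀ t ∈ Icc a b, ∀ i, |S.diag t i| + |S.sub t i| ≤ K := by
  haveI : Nonempty (Fin n) := ⟨⟨0, Nat.pos_of_ne_zero (NeZero.ne n)⟩⟩
  have hC : ∀ i : Fin n, ∃ C : ℝ, ∀ t ∈ Icc a b, |S.diag t i| + |S.sub t i| ≤ C := by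
    intro i
    obtain ⟨C, hC⟩ := (isCompact_Icc (a := a) (b := b)).exists_bound_of_continuousOn
      (((S.cont_diag i).abs.add (S.cont_sub i).abs)).continuousOn
    refine ⟨C, fun t ht => ?_⟩
    have h := hC t ht
    rwa [Real.norm_eq_abs, abs_of_nonneg (add_nonneg (abs_nonneg _) (abs_nonneg _))] at h
  choose C hCb using hC
  refine ⟨max 0 (Finset.univ.sup' Finset.univ_nonempty C), le_max_left _ _, fun t ht i => ?_⟩
  exact le_trans (le_trans (hCb i t ht) (Finset.le_sup' _ (Finset.mem_univ i))) (le_max_right _ _)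

lemma deriv_norm_bound {K : ℝ} (hKnn : 0 ≤ K) (t : ℝ)
    (hK : ∀ i, |S.diag t i| + |S.sub t i| ≤ K) :
    ‖(fun i => S.diag t i * x t i + S.sub t i * x t (i - 1))‖ ≤ K * ‖x t‖ := by
  rw [pi_norm_le_iff_of_nonneg (mul_nonneg hKnn (norm_nonneg _))]
  intro i
  have h1 : |x t i| ≤ ‖x t‖ := norm_le_pi_norm (x t) i
  have h2 : |x t (i-1)| ≤ ‖x t‖ := norm_le_pi_norm (x t) (i-1)
  have h3 := hK i
  rw [Real.norm_eq_abs]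
  calc |S.diag t i * x t i + S.sub t i * x t (i - 1)|
      ≤ |S.diag t i * x t i| + |S.sub t i * x t (i - 1)| := abs_add_le _ _
    _ = |S.diag t i| * |x t i| + |S.sub t i| * |x t (i-1)| := by rw [abs_mul, abs_mul]
    _ ≤ |S.diag t i| * ‖x t‖ + |S.sub t i| * ‖x t‖ := by
        have ha := abs_nonneg (S.diag t i)
        have hb := abs_nonneg (S.sub t i)
        gcongr
    _ = (|S.diag t i| + |S.sub t i|) * ‖x t‖ := by ring
    _ ≤ K * ‖x t‖ := by gcongr

variable (hsol : S.IsSolution x)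

include hsol in
lemma xderiv : ∀ t, HasDerivAt x (fun i => S.diag t i * x t i + S.sub t i * x t (i - 1)) t :=
  fun t => hasDerivAt_pi.2 fun i => hsol t i

include hsol in
lemma never_zero (hnontriv : ¬ ∀ t, x t = 0) : ∀ t, x t ≠ 0 := by
  intro t₀ h0
  apply hnontriv
  intro t
  rcases le_or_gt t₀ t with h | h
  · obtain ⟨K, hKnn, hK⟩ := coef_bound S t₀ t
    exact gron_zero h (xderiv S x hsol)
      (fun u hu => deriv_norm_bound S x hKnn u (hK u hu)) h0
  · set g : ℝ → Fin n → ℝ := fun s => x (t + t₀ - s) with hgdef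
    obtain ⟨K, hKnn, hK⟩ := coef_bound S t t₀
    have hgd : ∀ s, HasDerivAt g
        ((-1 : ℝ) • fun i => S.diag (t + t₀ - s) i * x (t + t₀ - s) i
          + S.sub (t + t₀ - s) i * x (t + t₀ - s) (i - 1)) s := by
      intro s
      have hinner : HasDerivAt (fun s : ℝ => t + t₀ - s) (-1) s := by
        simpa using (hasDerivAt_id s).const_sub (t + t₀)
      exact (xderiv S x hsol (t + t₀ - s)).scomp s hinner
    have hgz : g t = 0 := by simp [hgdef, h0]
    have hbnd : ∀ s ∈ Icc t t₀,
        ‖(-1 : ℝ) • fun i => S.diag (t + t₀ - s) i * x (t + t₀ - s) i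
          + S.sub (t + t₀ - s) i * x (t + t₀ - s) (i - 1)‖ ≤ K * ‖g s‖ := by
      intro s hs
      have hmem : t + t₀ - s ∈ Icc t t₀ := ⟨by linarith [hs.2], by linarith [hs.1]⟩
      rw [norm_smul]
      simp only [norm_neg, norm_one, Real.norm_eq_abs, abs_neg, abs_one, one_mul]
      exact deriv_norm_bound S x hKnn _ (hK _ hmem)
    have hfin : g t₀ = 0 := gron_zero h.le hgd hbnd hgz
    simpa [hgdef] using hfin

include hsol in
lemma cont_sign (t₀ : ℝ) (i : Fin n) (h : x t₀ i ≠ 0) :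
    ∃ ε > 0, ∀ s : ℝ, |s - t₀| < ε → 0 < x s i * x t₀ i := by
  have hc : ContinuousAt (fun s => x s i * x t₀ i) t₀ :=
    (hsol t₀ i).continuousAt.mul continuousAt_const
  have h0 : 0 < x t₀ i * x t₀ i := mul_self_pos.2 h
  have hev : ∀ᶠ s in 𝓝 t₀, 0 < x s i * x t₀ i := hc (Ioi_mem_nhds h0)
  rw [Metric.eventually_nhds_iff] at hev
  obtain ⟨ε, hε, h2⟩ := hev
  exact ⟨ε, hε, fun s hs => h2 (by rwa [Real.dist_eq])⟩

lemma delta_sub_pos (u : ℝ) (j : Fin n) : 0 < cyclicDelta n j * S.sub u j := by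
  by_cases hj : j = 0
  · subst hj
    have h1 := S.sub_neg u
    have hd : cyclicDelta n (0 : Fin n) = -1 := if_pos rfl
    rw [hd]
    nlinarith
  · have := S.sub_pos u j hj
    simp only [cyclicDelta, if_neg hj]
    linarith

include hsol in
lemma aux_deriv (j : Fin n) (t₀ s : ℝ) :
    HasDerivAt (fun u => Real.exp (-(∫ r in t₀..u, S.diag r j)) * x u j)
      (Real.exp (-(∫ r in t₀..s, S.diag r j)) * (S.sub s j * x s (j - 1))) s := by
  have hA : HasDerivAt (fun u => ∫ r in t₀..u, S.diag r j) (S.diag s j) s :=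
    intervalIntegral.integral_hasDerivAt_right ((S.cont_diag j).intervalIntegrable _ _)
      ((S.cont_diag j).stronglyMeasurableAtFilter _ _) (S.cont_diag j).continuousAt
  have hE : HasDerivAt (fun u => Real.exp (-(∫ r in t₀..u, S.diag r j)))
      (Real.exp (-(∫ r in t₀..s, S.diag r j)) * (-S.diag s j)) s := hA.neg.exp
  have hm : HasDerivAt (fun u => Real.exp (-(∫ r in t₀..u, S.diag r j)) * x u j) _ s :=
    hE.mul (hsol s j)
  convert hm using 1
  ring

include hsol in
lemma prop_sign_right (j : Fin n) (t₀ ε : ℝ) (hε : 0 < ε) (σ : ℝ)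
    (h0 : x t₀ j = 0)
    (hr : ∀ s ∈ Ioo t₀ (t₀ + ε), 0 < σ * x s (j - 1)) :
    ∀ s ∈ Ioo t₀ (t₀ + ε), 0 < (cyclicDelta n j * σ) * x s j := by
  set c : ℝ := cyclicDelta n j * σ with hc
  set g : ℝ → ℝ := fun u => c * (Real.exp (-(∫ r in t₀..u, S.diag r j)) * x u j) with hgdef
  have hg : ∀ u, HasDerivAt g
      (c * (Real.exp (-(∫ r in t₀..u, S.diag r j)) * (S.sub u j * x u (j - 1)))) u :=
    fun u => (aux_deriv S x hsol j t₀ u).const_mul c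
  have hmono : StrictMonoOn g (Ico t₀ (t₀ + ε)) := by
    apply strictMonoOn_of_deriv_pos (convex_Ico _ _)
      (fun u _ => (hg u).continuousAt.continuousWithinAt)
    intro u hu
    rw [interior_Ico] at hu
    rw [(hg u).deriv]
    have h1 := delta_sub_pos S u j
    have h2 := hr u hu
    have e : c * (Real.exp (-(∫ r in t₀..u, S.diag r j)) * (S.sub u j * x u (j - 1)))
        = Real.exp (-(∫ r in t₀..u, S.diag r j))
          * ((cyclicDelta n j * S.sub u j) * (σ * x u (j - 1))) := by
      rw [hc]; ring
    rw [e]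
    exact mul_pos (Real.exp_pos _) (mul_pos h1 h2)
  have hg0 : g t₀ = 0 := by
    simp [hgdef, intervalIntegral.integral_same, h0]
  intro s hs
  have hlt : g t₀ < g s :=
    hmono ⟨le_rfl, by linarith [hs.1, hs.2]⟩ ⟨hs.1.le, hs.2⟩ hs.1
  rw [hg0] at hlt
  simp only [hgdef] at hlt
  have hE : 0 < Real.exp (-(∫ r in t₀..s, S.diag r j)) := Real.exp_pos _
  have he : c * (Real.exp (-(∫ r in t₀..s, S.diag r j)) * x s j)
      = Real.exp (-(∫ r in t₀..s, S.diag r j)) * (c * x s j) := by ring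
  rw [he] at hlt
  exact (mul_pos_iff_of_pos_left hE).1 hlt

include hsol in
lemma prop_sign_left (j : Fin n) (t₀ ε : ℝ) (hε : 0 < ε) (σ : ℝ)
    (h0 : x t₀ j = 0)
    (hr : ∀ s ∈ Ioo (t₀ - ε) t₀, 0 < σ * x s (j - 1)) :
    ∀ s ∈ Ioo (t₀ - ε) t₀, (cyclicDelta n j * σ) * x s j < 0 := by
  set c : ℝ := cyclicDelta n j * σ with hc
  set g : ℝ → ℝ := fun u => c * (Real.exp (-(∫ r in t₀..u, S.diag r j)) * x u j) with hgdef
  have hg : ∀ u, HasDerivAt g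
      (c * (Real.exp (-(∫ r in t₀..u, S.diag r j)) * (S.sub u j * x u (j - 1)))) u :=
    fun u => (aux_deriv S x hsol j t₀ u).const_mul c
  have hmono : StrictMonoOn g (Ioc (t₀ - ε) t₀) := by
    apply strictMonoOn_of_deriv_pos (convex_Ioc _ _)
      (fun u _ => (hg u).continuousAt.continuousWithinAt)
    intro u hu
    rw [interior_Ioc] at hu
    rw [(hg u).deriv]
    have h1 := delta_sub_pos S u j
    have h2 := hr u hu
    have e : c * (Real.exp (-(∫ r in t₀..u, S.diag r j)) * (S.sub u j * x u (j - 1)))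
        = Real.exp (-(∫ r in t₀..u, S.diag r j))
          * ((cyclicDelta n j * S.sub u j) * (σ * x u (j - 1))) := by
      rw [hc]; ring
    rw [e]
    exact mul_pos (Real.exp_pos _) (mul_pos h1 h2)
  have hg0 : g t₀ = 0 := by
    simp [hgdef, intervalIntegral.integral_same, h0]
  intro s hs
  have hlt : g s < g t₀ :=
    hmono ⟨hs.1, hs.2.le⟩ ⟨by linarith [hs.1, hs.2], le_rfl⟩ hs.2
  rw [hg0] at hlt
  simp only [hgdef] at hlt
  have hE : 0 < Real.exp (-(∫ r in t₀..s, S.diag r j)) := Real.exp_pos _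
  have he : c * (Real.exp (-(∫ r in t₀..s, S.diag r j)) * x s j)
      = -(Real.exp (-(∫ r in t₀..s, S.diag r j)) * (-(c * x s j))) := by ring
  rw [he] at hlt
  have h2 : 0 < Real.exp (-(∫ r in t₀..s, S.diag r j)) * (-(c * x s j)) := by linarith
  have h3 := (mul_pos_iff_of_pos_left hE).1 h2
  linarith

open Fin.NatCast Fin.CommRing in
include hsol in
lemma sign_const (hnz : ∀ t, x t ≠ 0) (t₀ : ℝ) (j : Fin n) :
    ∃ ε > 0, ∃ σp σm : ℝ, (σp = 1 ∨ σp = -1) ∧ (σm = 1 ∨ σm = -1) ∧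
      (∀ s ∈ Ioo t₀ (t₀ + ε), 0 < σp * x s j) ∧
      (∀ s ∈ Ioo (t₀ - ε) t₀, 0 < σm * x s j) := by
  obtain ⟨i₀, hi₀⟩ : ∃ i, x t₀ i ≠ 0 := by
    by_contra hcon
    push_neg at hcon
    exact hnz t₀ (funext hcon)
  have base : ∀ i : Fin n, x t₀ i ≠ 0 → ∃ ε > 0, ∃ σp σm : ℝ,
      (σp = 1 ∨ σp = -1) ∧ (σm = 1 ∨ σm = -1) ∧
      (∀ s ∈ Ioo t₀ (t₀ + ε), 0 < σp * x s i) ∧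
      (∀ s ∈ Ioo (t₀ - ε) t₀, 0 < σm * x s i) := by
    intro i hi
    obtain ⟨ε, hε, hc⟩ := cont_sign S x hsol t₀ i hi
    by_cases hpos : 0 < x t₀ i
    · refine ⟨ε, hε, 1, 1, Or.inl rfl, Or.inl rfl, ?_, ?_⟩ <;>
      · intro s hs
        obtain ⟨hs1, hs2⟩ := hs
        have h2 := hc s (abs_lt.2 ⟨by linarith, by linarith⟩)
        nlinarith
    · have hneg : x t₀ i < 0 := lt_of_le_of_ne (not_lt.1 hpos) hi
      refine ⟨ε, hε, -1, -1, Or.inr rfl, Or.inr rfl, ?_, ?_⟩ <;>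
      · intro s hs
        obtain ⟨hs1, hs2⟩ := hs
        have h2 := hc s (abs_lt.2 ⟨by linarith, by linarith⟩)
        nlinarith
  have step : ∀ m : ℕ, ∃ ε > 0, ∃ σp σm : ℝ,
      (σp = 1 ∨ σp = -1) ∧ (σm = 1 ∨ σm = -1) ∧
      (∀ s ∈ Ioo t₀ (t₀ + ε), 0 < σp * x s (i₀ + (m : Fin n))) ∧
      (∀ s ∈ Ioo (t₀ - ε) t₀, 0 < σm * x s (i₀ + (m : Fin n))) := by
    intro m
    induction m with
    | zero => simpa using base i₀ hi₀
    | succ m ih =>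
      by_cases hz : x t₀ (i₀ + ((m + 1 : ℕ) : Fin n)) = 0
      · obtain ⟨ε, hε, σp, σm, hσp, hσm, hp, hm⟩ := ih
        have hsub : (i₀ + ((m + 1 : ℕ) : Fin n)) - 1 = i₀ + (m : Fin n) := by
          rw [Nat.cast_succ]; ring
        have hp' := prop_sign_right S x hsol (i₀ + ((m + 1 : ℕ) : Fin n)) t₀ ε hε σp hz
          (by rw [hsub]; exact hp)
        have hm' := prop_sign_left S x hsol (i₀ + ((m + 1 : ℕ) : Fin n)) t₀ ε hε σm hz
          (by rw [hsub]; exact hm)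
        refine ⟨ε, hε, cyclicDelta n (i₀ + ((m + 1 : ℕ) : Fin n)) * σp,
          -(cyclicDelta n (i₀ + ((m + 1 : ℕ) : Fin n)) * σm), ?_, ?_, hp', ?_⟩
        · rcases cyclicDelta_cases (n := n) (i₀ + ((m + 1 : ℕ) : Fin n)) with h1 | h1 <;>
            rcases hσp with h2 | h2 <;> rw [h1, h2] <;> norm_num
        · rcases cyclicDelta_cases (n := n) (i₀ + ((m + 1 : ℕ) : Fin n)) with h1 | h1 <;>
            rcases hσm with h2 | h2 <;> rw [h1, h2] <;> norm_num
        · intro s hs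
          have := hm' s hs
          rw [neg_mul]
          linarith
      · exact base _ hz
  obtain ⟨m, hm⟩ : ∃ m : ℕ, i₀ + (m : Fin n) = j :=
    ⟨(j - i₀).val, by rw [Fin.cast_val_eq_self]; ring⟩
  rw [← hm]
  exact step m

include hsol in
lemma ML (hnz : ∀ t, x t ≠ 0) (t₀ : ℝ) :
    ∃ ε > 0, ∃ σp σm : Fin n → ℝ,
      (∀ i, ∀ s ∈ Ioo t₀ (t₀ + ε), 0 < σp i * x s i) ∧
      (∀ i, ∀ s ∈ Ioo (t₀ - ε) t₀, 0 < σm i * x s i) ∧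
      (∀ i, x t₀ i = 0 → ∀ s ∈ Ioo t₀ (t₀ + ε),
        0 < cyclicDelta n i * x s i * x s (i - 1)) ∧
      (∀ i, x t₀ i = 0 → ∀ s ∈ Ioo (t₀ - ε) t₀,
        cyclicDelta n i * x s i * x s (i - 1) < 0) ∧
      (∀ i, x t₀ i ≠ 0 → ∀ s, |s - t₀| < ε → 0 < x s i * x t₀ i) := by
  haveI : Nonempty (Fin n) := ⟨⟨0, Nat.pos_of_ne_zero (NeZero.ne n)⟩⟩
  choose ε1 hε1 σp σm hσp hσm hp hm using fun i => sign_const S x hsol hnz t₀ i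
  have h2ex : ∀ i : Fin n, ∃ ε > 0, (x t₀ i ≠ 0 → ∀ s, |s - t₀| < ε → 0 < x s i * x t₀ i) := by
    intro i
    by_cases hi : x t₀ i = 0
    · exact ⟨1, one_pos, fun h => absurd hi h⟩
    · obtain ⟨ε, hε, hc⟩ := cont_sign S x hsol t₀ i hi
      exact ⟨ε, hε, fun _ => hc⟩
  choose ε2 hε2 h2 using h2ex
  set ε : ℝ := min (Finset.univ.inf' Finset.univ_nonempty ε1)
      (Finset.univ.inf' Finset.univ_nonempty ε2) with hεdef
  have hε : 0 < ε := by
    apply lt_min <;> rw [Finset.lt_inf'_iff] <;> intro i _ <;> [exact hε1 i; exact hε2 i]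
  have hle1 : ∀ i, ε ≤ ε1 i := fun i =>
    le_trans (min_le_left _ _) (Finset.inf'_le _ (Finset.mem_univ i))
  have hle2 : ∀ i, ε ≤ ε2 i := fun i =>
    le_trans (min_le_right _ _) (Finset.inf'_le _ (Finset.mem_univ i))
  have hP : ∀ i, ∀ s ∈ Ioo t₀ (t₀ + ε), 0 < σp i * x s i := by
    intro i s hs
    exact hp i s ⟨hs.1, by have := hle1 i; have := hs.2; linarith⟩
  have hM : ∀ i, ∀ s ∈ Ioo (t₀ - ε) t₀, 0 < σm i * x s i := by
    intro i s hs
    exact hm i s ⟨by have := hle1 i; have := hs.1; linarith, hs.2⟩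
  refine ⟨ε, hε, σp, σm, hP, hM, ?_, ?_, ?_⟩
  · intro i hi s hs
    have ha := prop_sign_right S x hsol i t₀ ε hε (σp (i - 1)) hi (hP (i - 1)) s hs
    have hb := hP (i - 1) s hs
    rcases hσp (i - 1) with h | h <;> rw [h] at ha hb <;> nlinarith [mul_pos ha hb]
  · intro i hi s hs
    have ha := prop_sign_left S x hsol i t₀ ε hε (σm (i - 1)) hi (hM (i - 1)) s hs
    have hb := hM (i - 1) s hs
    rcases hσm (i - 1) with h | h <;> rw [h] at ha hb <;>
      nlinarith [mul_neg_of_neg_of_pos ha hb]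
  · intro i hi s hs
    exact h2 i hi s (lt_of_lt_of_le hs (hle2 i))

include hsol in
lemma freq_right (t₀ ε : ℝ) (hε : 0 < ε) (k : ℕ)
    (h : ∀ s ∈ Ioo t₀ (t₀ + ε), x s ∈ cyclicLambda n ∧ cyclicN n (x s) = k) :
    ∃ᶠ y in 𝓝[cyclicLambda n] (x t₀), cyclicN n y = k := by
  rw [Filter.frequently_iff]
  intro U hU
  rw [mem_nhdsWithin] at hU
  obtain ⟨V, hVo, hxV, hVU⟩ := hU
  have hc : ContinuousAt x t₀ := (xderiv S x hsol t₀).continuousAt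
  have hev : ∀ᶠ s in 𝓝 t₀, x s ∈ V := hc (hVo.mem_nhds hxV)
  rw [Metric.eventually_nhds_iff] at hev
  obtain ⟨δ, hδ, hball⟩ := hev
  have hmin : 0 < min δ ε := lt_min hδ hε
  have hminδ := min_le_left δ ε
  have hminε := min_le_right δ ε
  have hsI : t₀ + min δ ε / 2 ∈ Ioo t₀ (t₀ + ε) := ⟨by linarith, by linarith⟩
  have hd : dist (t₀ + min δ ε / 2) t₀ < δ := by
    rw [Real.dist_eq, show t₀ + min δ ε / 2 - t₀ = min δ ε / 2 by ring,
      abs_of_pos (by linarith)]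
    linarith
  exact ⟨x (t₀ + min δ ε / 2), hVU ⟨hball hd, (h _ hsI).1⟩, (h _ hsI).2⟩

include hsol in
lemma freq_left (t₀ ε : ℝ) (hε : 0 < ε) (k : ℕ)
    (h : ∀ s ∈ Ioo (t₀ - ε) t₀, x s ∈ cyclicLambda n ∧ cyclicN n (x s) = k) :
    ∃ᶠ y in 𝓝[cyclicLambda n] (x t₀), cyclicN n y = k := by
  rw [Filter.frequently_iff]
  intro U hU
  rw [mem_nhdsWithin] at hU
  obtain ⟨V, hVo, hxV, hVU⟩ := hU
  have hc : ContinuousAt x t₀ := (xderiv S x hsol t₀).continuousAt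
  have hev : ∀ᶠ s in 𝓝 t₀, x s ∈ V := hc (hVo.mem_nhds hxV)
  rw [Metric.eventually_nhds_iff] at hev
  obtain ⟨δ, hδ, hball⟩ := hev
  have hmin : 0 < min δ ε := lt_min hδ hε
  have hminδ := min_le_left δ ε
  have hminε := min_le_right δ ε
  have hsI : t₀ - min δ ε / 2 ∈ Ioo (t₀ - ε) t₀ := ⟨by linarith, by linarith⟩
  have hd : dist (t₀ - min δ ε / 2) t₀ < δ := by
    rw [Real.dist_eq, show t₀ - min δ ε / 2 - t₀ = -(min δ ε / 2) by ring, abs_neg,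
      abs_of_pos (by linarith)]
    linarith
  exact ⟨x (t₀ - min δ ε / 2), hVU ⟨hball hd, (h _ hsI).1⟩, (h _ hsI).2⟩

include hsol in
lemma KEY (hnz : ∀ t, x t ≠ 0) (t₀ : ℝ) :
    ∃ ε > 0, ∃ Nl Nr : ℕ,
      (∀ s ∈ Ioo (t₀ - ε) t₀, x s ∈ cyclicLambda n ∧ cyclicN n (x s) = Nl) ∧
      (∀ s ∈ Ioo t₀ (t₀ + ε), x s ∈ cyclicLambda n ∧ cyclicN n (x s) = Nr) ∧
      Nr ≤ Nl ∧
      (x t₀ ∈ cyclicGood n → cyclicNm n (x t₀) = Nl ∧ cyclicNm n (x t₀) = Nr) := by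
  obtain ⟨ε, hε, σp, σm, hP, hM, hZr, hZl, hNZ⟩ := ML S x hsol hnz t₀
  have hLam_r : ∀ s ∈ Ioo t₀ (t₀ + ε), x s ∈ cyclicLambda n := by
    intro s hs i
    have := hP i s hs
    intro h0
    rw [h0, mul_zero] at this
    exact lt_irrefl _ this
  have hLam_l : ∀ s ∈ Ioo (t₀ - ε) t₀, x s ∈ cyclicLambda n := by
    intro s hs i
    have := hM i s hs
    intro h0
    rw [h0, mul_zero] at this
    exact lt_irrefl _ this
  have hNr : ∀ s ∈ Ioo t₀ (t₀ + ε), cyclicN n (x s) = cyclicN n σp :=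
    fun s hs => cyclicN_congr (fun i => by rw [mul_comm]; exact hP i s hs)
  have hNl : ∀ s ∈ Ioo (t₀ - ε) t₀, cyclicN n (x s) = cyclicN n σm :=
    fun s hs => cyclicN_congr (fun i => by rw [mul_comm]; exact hM i s hs)
  have hcompare : cyclicN n σp ≤ cyclicN n σm := by
    have hsR : t₀ + ε / 2 ∈ Ioo t₀ (t₀ + ε) := ⟨by linarith, by linarith⟩
    have hsL : t₀ - ε / 2 ∈ Ioo (t₀ - ε) t₀ := ⟨by linarith, by linarith⟩
    rw [← hNr _ hsR, ← hNl _ hsL]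
    apply comb _ _ (fun i => x t₀ i = 0)
    · intro i hi
      exact hZr i hi _ hsR
    · intro i hi
      exact hZl i hi _ hsL
    · intro i hi hi1
      have ay := hNZ i hi (t₀ + ε / 2) (abs_lt.2 ⟨by linarith, by linarith⟩)
      have az := hNZ i hi (t₀ - ε / 2) (abs_lt.2 ⟨by linarith, by linarith⟩)
      have ay' := hNZ (i - 1) hi1 (t₀ + ε / 2) (abs_lt.2 ⟨by linarith, by linarith⟩)
      have az' := hNZ (i - 1) hi1 (t₀ - ε / 2) (abs_lt.2 ⟨by linarith, by linarith⟩)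
      have hti := mul_self_pos.2 hi
      have hti1 := mul_self_pos.2 hi1
      have hyz : 0 < x (t₀ + ε / 2) i * x (t₀ - ε / 2) i := by
        nlinarith [mul_pos ay az]
      have hyz' : 0 < x (t₀ + ε / 2) (i - 1) * x (t₀ - ε / 2) (i - 1) := by
        nlinarith [mul_pos ay' az']
      have key : 0 < (cyclicDelta n i * x (t₀ + ε / 2) i * x (t₀ + ε / 2) (i - 1))
          * (cyclicDelta n i * x (t₀ - ε / 2) i * x (t₀ - ε / 2) (i - 1)) := by
        have e : (cyclicDelta n i * x (t₀ + ε / 2) i * x (t₀ + ε / 2) (i - 1))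
            * (cyclicDelta n i * x (t₀ - ε / 2) i * x (t₀ - ε / 2) (i - 1))
            = (cyclicDelta n i * cyclicDelta n i)
              * ((x (t₀ + ε / 2) i * x (t₀ - ε / 2) i)
                * (x (t₀ + ε / 2) (i - 1) * x (t₀ - ε / 2) (i - 1))) := by ring
        rw [e, cyclicDelta_sq, one_mul]
        exact mul_pos hyz hyz'
      exact lt_iff_of_mul_pos key
  refine ⟨ε, hε, cyclicN n σm, cyclicN n σp,
    fun s hs => ⟨hLam_l s hs, hNl s hs⟩, fun s hs => ⟨hLam_r s hs, hNr s hs⟩, hcompare, ?_⟩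
  intro hg
  constructor
  · exact good_eq hg (freq_left S x hsol t₀ ε hε _ (fun s hs => ⟨hLam_l s hs, hNl s hs⟩))
  · exact good_eq hg (freq_right S x hsol t₀ ε hε _ (fun s hs => ⟨hLam_r s hs, hNr s hs⟩))
end Aux2
end Aux

/-- For a nontrivial solution `x` of the linear cyclic negative
feedback system, the set of times at which `x(t) ∉ 𝒩` consists of isolated
points, and `N(x(·))` is nonincreasing along the solution (on 𝒩 the value of
the continuous extension of `N` is `N_m = N_M`). -/
theorem stmt0 (n : ℕ) [NeZero n] (hn : 2 ≤ n) (S : LinCNF n) (x : ℝ → Fin n → ℝ)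
    (hsol : S.IsSolution x) (hnontriv : ¬ ∀ t, x t = 0) :
    (∀ t : ℝ, x t ∉ cyclicGood n →
      ∃ ε > (0 : ℝ), ∀ s : ℝ, s ≠ t → |s - t| < ε → x s ∈ cyclicGood n) ∧
    (∀ s t : ℝ, s < t → x s ∈ cyclicGood n → x t ∈ cyclicGood n →
      cyclicNm n (x t) ≤ cyclicNm n (x s)) := by
  classical
  have hnz := Aux.Aux2.never_zero S x hsol hnontriv
  choose ε hε Nl Nr hL hR hle hgood using fun t₀ => Aux.Aux2.KEY S x hsol hnz t₀
  constructor
  · intro t _ht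
    refine ⟨ε t, hε t, fun s hst hd => ?_⟩
    obtain ⟨hd1, hd2⟩ := abs_lt.1 hd
    have hmem : x s ∈ cyclicLambda n := by
      rcases lt_or_gt_of_ne hst with h | h
      · exact (hL t s ⟨by linarith, h⟩).1
      · exact (hR t s ⟨h, by linarith⟩).1
    exact (Aux.lambda_good hmem).1
  · intro s t hst hgs hgt
    have P1 : ∀ t₀ u, u ∈ Set.Ico t₀ (t₀ + ε t₀) → Nr u = Nr t₀ := by
      intro t₀ u hu
      rcases eq_or_lt_of_le hu.1 with h | hlt
      · rw [← h]
      · have hu2 := hu.2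
        have hw1 : u < min (u + ε u) (t₀ + ε t₀) := lt_min (by linarith [hε u]) hu2
        set v := (u + min (u + ε u) (t₀ + ε t₀)) / 2 with hv
        have hv1 : u < v := by rw [hv]; linarith
        have hv2 : v < min (u + ε u) (t₀ + ε t₀) := by rw [hv]; linarith
        have hvu : v ∈ Set.Ioo u (u + ε u) := ⟨hv1, lt_of_lt_of_le hv2 (min_le_left _ _)⟩
        have hvt : v ∈ Set.Ioo t₀ (t₀ + ε t₀) :=
          ⟨lt_trans hlt hv1, lt_of_lt_of_le hv2 (min_le_right _ _)⟩
        exact ((hR u v hvu).2).symm.trans ((hR t₀ v hvt).2)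
    have P2 : ∀ t₀ u, u ∈ Set.Ioo (t₀ - ε t₀) t₀ → Nr t₀ ≤ Nr u := by
      intro t₀ u hu
      have hw1 : u < min (u + ε u) t₀ := lt_min (by linarith [hε u]) hu.2
      set v := (u + min (u + ε u) t₀) / 2 with hv
      have hv1 : u < v := by rw [hv]; linarith
      have hv2 : v < min (u + ε u) t₀ := by rw [hv]; linarith
      have hvu : v ∈ Set.Ioo u (u + ε u) := ⟨hv1, lt_of_lt_of_le hv2 (min_le_left _ _)⟩
      have hvt : v ∈ Set.Ioo (t₀ - ε t₀) t₀ :=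
        ⟨by linarith [hu.1], lt_of_lt_of_le hv2 (min_le_right _ _)⟩
      have e : Nr u = Nl t₀ := ((hR u v hvu).2).symm.trans ((hL t₀ v hvt).2)
      rw [e]
      exact hle t₀
    have mono : ∀ a b : ℝ, a ≤ b → Nr b ≤ Nr a := by
      intro a b hab
      set SS : Set ℝ := {u | u ∈ Set.Icc a b ∧ Nr u ≤ Nr a} with hSS
      have hne : a ∈ SS := ⟨⟨le_rfl, hab⟩, le_rfl⟩
      have hbdd : BddAbove SS := ⟨b, fun u hu => hu.1.2⟩
      set c := sSup SS with hc
      have hac : a ≤ c := le_csSup hbdd hne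
      have hcb : c ≤ b := csSup_le ⟨a, hne⟩ (fun u hu => hu.1.2)
      have hcS : c ∈ SS := by
        rcases le_or_gt (Nr c) (Nr a) with hle' | hlt'
        · exact ⟨⟨hac, hcb⟩, hle'⟩
        · exfalso
          obtain ⟨u, huS, hu⟩ := exists_lt_of_lt_csSup ⟨a, hne⟩
            (show c - ε c < c by linarith [hε c])
          have hu2 : u ≤ c := le_csSup hbdd huS
          have hu3 : u < c := by
            rcases lt_or_eq_of_le hu2 with h | h
            · exact h
            · exfalso
              rw [h] at huS
              exact absurd huS.2 (not_le.2 hlt')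
          have hP := P2 c u ⟨hu, hu3⟩
          exact absurd (le_trans hP huS.2) (not_le.2 hlt')
      rcases eq_or_lt_of_le hcb with h | h
      · rw [← h]
        exact hcS.2
      · exfalso
        have hv1 : c < min (c + ε c / 2) b := lt_min (by linarith [hε c]) h
        have hv2 : min (c + ε c / 2) b ∈ Set.Ico c (c + ε c) :=
          ⟨hv1.le, lt_of_le_of_lt (min_le_left _ _) (by linarith [hε c])⟩
        have hPv := P1 c _ hv2
        have hvS : min (c + ε c / 2) b ∈ SS :=
          ⟨⟨le_trans hac hv1.le, min_le_right _ _⟩, by rw [hPv]; exact hcS.2⟩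
        exact absurd (le_csSup hbdd hvS) (not_le.2 hv1)
    have h1 := (hgood t hgt).2
    have h2 := (hgood s hgs).2
    rw [h1, h2]
    exact mono s t hst.le
end

section
/- Let x(t) be a nontrivial solution of the linear cyclic negative feedback system and suppose x(t₀) ∉ 𝒩. Then there exists ε₀ > 0 such that for all 0 < ε < ε₀ one has x(t₀ + ε) ∈ 𝒩, x(t₀ − ε) ∈ 𝒩, and N(x(t₀ + ε)) < N(x(t₀ − ε)). -/
open Filter Topology

section Comb
variable {n : ℕ} [NeZero n]

open scoped Classical in
lemma cyclicN_eq_card (y : Fin n → ℝ) :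
    cyclicN n y
      = (Finset.univ.filter fun i => cyclicDelta n i * y i * y (i - 1) < 0).card := by
  rw [cyclicN, Nat.card_eq_fintype_card, Fintype.card_subtype]

lemma cyclicDelta_sq (i : Fin n) : cyclicDelta n i * cyclicDelta n i = 1 := by
  unfold cyclicDelta; split <;> norm_num

lemma cyclicDelta_ne (i : Fin n) : cyclicDelta n i ≠ 0 := by
  unfold cyclicDelta; split <;> norm_num

open scoped Classical

private lemma card_shift (p : Fin n → ℝ → Prop) (r : Fin n → ℝ) :
    (Finset.univ.filter fun i => p i (r (i - 1))).card
      = (Finset.univ.filter fun i => p (i + 1) (r i)).card := by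
  apply Finset.card_nbij (fun i => i - 1)
  · intro i hi
    simp only [Finset.mem_filter, Finset.mem_univ, true_and, Finset.mem_coe] at *
    simpa using hi
  · intro i hi j hj hij
    have := congrArg (· + 1) hij
    simpa using this
  · intro j hj
    simp only [Finset.coe_filter, Set.mem_setOf_eq, Finset.mem_univ, true_and,
      Set.mem_image] at *
    exact ⟨j + 1, by simpa using hj, by simp⟩

/-- Number of up-crossings equals number of down-crossings for a cyclic ±1 sequence. -/
private lemma card_up_eq_down (r : Fin n → ℝ) (hr : ∀ i, r i = 1 ∨ r i = -1) :
    (Finset.univ.filter fun i => r (i - 1) < 0 ∧ 0 < r i).card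
      = (Finset.univ.filter fun i => 0 < r (i - 1) ∧ r i < 0).card := by
  have key : ∀ (q : Fin n → Prop) [DecidablePred q],
      (Finset.univ.filter fun i => r (i-1) < 0 ∧ q i).card
        + (Finset.univ.filter fun i => 0 < r (i-1) ∧ q i).card
      = (Finset.univ.filter q).card := by
    intro q _
    rw [← Finset.card_union_of_disjoint]
    · congr 1
      ext i
      simp only [Finset.mem_union, Finset.mem_filter, Finset.mem_univ, true_and]
      constructor
      · rintro (⟨_, h⟩ | ⟨_, h⟩) <;> exact h
      · intro h
        rcases hr (i - 1) with h1 | h1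
        · exact Or.inr ⟨by rw [h1]; norm_num, h⟩
        · exact Or.inl ⟨by rw [h1]; norm_num, h⟩
    · simp only [Finset.disjoint_filter]
      intro i _ ⟨h1, _⟩ ⟨h2, _⟩
      exact absurd (h1.trans h2) (lt_irrefl _)
  have key2 : ∀ (q : Fin n → Prop) [DecidablePred q],
      (Finset.univ.filter fun i => q i ∧ r i < 0).card
        + (Finset.univ.filter fun i => q i ∧ 0 < r i).card
      = (Finset.univ.filter q).card := by
    intro q _
    rw [← Finset.card_union_of_disjoint]
    · congr 1
      ext i
      simp only [Finset.mem_union, Finset.mem_filter, Finset.mem_univ, true_and]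
      constructor
      · rintro (⟨h, _⟩ | ⟨h, _⟩) <;> exact h
      · intro h
        rcases hr i with h1 | h1
        · exact Or.inr ⟨h, by rw [h1]; norm_num⟩
        · exact Or.inl ⟨h, by rw [h1]; norm_num⟩
    · simp only [Finset.disjoint_filter]
      intro i _ ⟨_, h1⟩ ⟨_, h2⟩
      exact absurd (h1.trans h2) (lt_irrefl _)
  have e1 := key (fun i => 0 < r i)
  have e2 := key2 (fun i => 0 < r (i - 1))
  have e3 : (Finset.univ.filter fun i => 0 < r (i - 1)).card
      = (Finset.univ.filter fun i => 0 < r i).card :=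
    card_shift (fun _ v => 0 < v) r
  omega

/-- Minimality: if `u` has all its `Z`-terms positive and `v` matches `u` in sign
off `Z`, then `N u ≤ N v`. -/
lemma cyclicN_min_le (Z : Fin n → Prop) (u v : Fin n → ℝ)
    (hu : ∀ i, u i ≠ 0) (hv : ∀ i, v i ≠ 0)
    (hmatch : ∀ i, ¬ Z i → 0 < u i * v i)
    (hpos : ∀ i, Z i → 0 < cyclicDelta n i * u i * u (i - 1)) :
    cyclicN n u ≤ cyclicN n v := by
  set d := cyclicDelta n with hd
  set r : Fin n → ℝ := fun i => if 0 < u i * v i then 1 else -1 with hrdef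
  have hr : ∀ i, r i = 1 ∨ r i = -1 := by
    intro i; by_cases h : 0 < u i * v i <;> simp [hrdef, h]
  have hrm : ∀ i, (u i * v i) * r i > 0 := by
    intro i
    by_cases h : 0 < u i * v i
    · simp only [hrdef, if_pos h]; linarith
    · have hne : u i * v i ≠ 0 := mul_ne_zero (hu i) (hv i)
      have : u i * v i < 0 := lt_of_le_of_ne (not_lt.1 h) hne
      simp only [hrdef, if_neg h]; nlinarith
  have hrZ : ∀ i, r i = -1 → Z i := by
    intro i hri
    by_contra hZ
    have := hmatch i hZ
    simp [hrdef, if_pos this] at hri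
    linarith
  -- sign relation
  have C : ∀ i, 0 < (d i * v i * v (i-1)) * (d i * u i * u (i-1)) * (r i * r (i-1)) := by
    intro i
    have h1 := hrm i
    have h2 := hrm (i - 1)
    have hdd : 0 < d i * d i := by
      rcases (show d i = -1 ∨ d i = 1 by unfold d; unfold cyclicDelta; split <;> simp)
        with h | h <;> rw [h] <;> norm_num
    calc (0:ℝ) < (d i * d i) * ((u i * v i) * r i) * ((u (i-1) * v (i-1)) * r (i-1)) := by
          positivity
      _ = (d i * v i * v (i-1)) * (d i * u i * u (i-1)) * (r i * r (i-1)) := by ring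
  rw [cyclicN_eq_card, cyclicN_eq_card]
  set Su := Finset.univ.filter fun i => d i * u i * u (i-1) < 0 with hSu
  set Sv := Finset.univ.filter fun i => d i * v i * v (i-1) < 0 with hSv
  set D := Finset.univ.filter fun i => r i * r (i-1) < 0 with hD
  have htu : ∀ i : Fin n, d i * u i * u (i-1) ≠ 0 := fun i =>
    mul_ne_zero (mul_ne_zero (cyclicDelta_ne i) (hu i)) (hu (i-1))
  have htv : ∀ i : Fin n, d i * v i * v (i-1) ≠ 0 := fun i =>
    mul_ne_zero (mul_ne_zero (cyclicDelta_ne i) (hv i)) (hv (i-1))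
  have hmem : ∀ i, i ∈ Sv ↔ ((i ∈ Su) ↔ (i ∉ D)) := by
    intro i
    have hC := C i
    have h1 := htu i
    have h2 := htv i
    simp only [hSu, hSv, hD, Finset.mem_filter, Finset.mem_univ, true_and]
    rcases hr i with hi | hi <;> rcases hr (i-1) with hj | hj
    · have hrr : r i * r (i - 1) = 1 := by rw [hi, hj]; norm_num
      have hP : 0 < (d i * v i * v (i-1)) * (d i * u i * u (i-1)) := by nlinarith
      have heq : (d i * v i * v (i-1) < 0) ↔ (d i * u i * u (i-1) < 0) :=
        ⟨fun h => by nlinarith, fun h => by nlinarith⟩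
      rw [hrr]; simp only [heq]; norm_num
    · have hrr : r i * r (i - 1) = -1 := by rw [hi, hj]; norm_num
      have hN : (d i * v i * v (i-1)) * (d i * u i * u (i-1)) < 0 := by nlinarith
      have heq : (d i * v i * v (i-1) < 0) ↔ ¬(d i * u i * u (i-1) < 0) :=
        ⟨fun h h' => by nlinarith, fun h => by
          rcases lt_or_gt_of_ne h1 with h' | h'
          · exact absurd h' h
          · nlinarith⟩
      rw [hrr]; simp only [heq]; norm_num
    · have hrr : r i * r (i - 1) = -1 := by rw [hi, hj]; norm_num
      have hN : (d i * v i * v (i-1)) * (d i * u i * u (i-1)) < 0 := by nlinarith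
      have heq : (d i * v i * v (i-1) < 0) ↔ ¬(d i * u i * u (i-1) < 0) :=
        ⟨fun h h' => by nlinarith, fun h => by
          rcases lt_or_gt_of_ne h1 with h' | h'
          · exact absurd h' h
          · nlinarith⟩
      rw [hrr]; simp only [heq]; norm_num
    · have hrr : r i * r (i - 1) = 1 := by rw [hi, hj]; norm_num
      have hP : 0 < (d i * v i * v (i-1)) * (d i * u i * u (i-1)) := by nlinarith
      have heq : (d i * v i * v (i-1) < 0) ↔ (d i * u i * u (i-1) < 0) :=
        ⟨fun h => by nlinarith, fun h => by nlinarith⟩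
      rw [hrr]; simp only [heq]; norm_num
  -- counting
  set A := Finset.univ.filter (fun i => r (i-1) < 0 ∧ 0 < r i) with hA
  set B := Finset.univ.filter (fun i => 0 < r (i-1) ∧ r i < 0) with hB
  have hAB : A.card = B.card := card_up_eq_down r hr
  have hSv_eq : Sv = (Su \ D) ∪ (D \ Su) := by
    ext i
    have := hmem i
    simp only [Finset.mem_union, Finset.mem_sdiff] at *
    tauto
  have hdisj : Disjoint (Su \ D) (D \ Su) := by
    rw [Finset.disjoint_left]
    intro a ha hb
    exact (Finset.mem_sdiff.1 ha).2 (Finset.mem_sdiff.1 hb).1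
  have hcv : Sv.card = (Su \ D).card + (D \ Su).card := by
    rw [hSv_eq, Finset.card_union_of_disjoint hdisj]
  have hcu : (Su ∩ D).card + (Su \ D).card = Su.card := Finset.card_inter_add_card_sdiff Su D
  have hsub1 : Su ∩ D ⊆ A := by
    intro i hi
    simp only [hSu, hD, hA, Finset.mem_inter, Finset.mem_filter, Finset.mem_univ,
      true_and] at *
    obtain ⟨hu', hD'⟩ := hi
    have hZ : ¬ Z i := fun h => by nlinarith [hpos i h]
    have hri : r i = 1 := (hr i).resolve_right (fun h => hZ (hrZ i h))
    rw [hri] at hD'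
    constructor
    · nlinarith
    · rw [hri]; norm_num
  have hsub2 : B ⊆ D \ Su := by
    intro i hi
    simp only [hSu, hD, hB, Finset.mem_sdiff, Finset.mem_filter, Finset.mem_univ,
      true_and] at *
    obtain ⟨hj, hi'⟩ := hi
    have hri : r i = -1 := (hr i).resolve_left (fun h => by rw [h] at hi'; norm_num at hi')
    have hZ : Z i := hrZ i hri
    constructor
    · nlinarith
    · have := hpos i hZ
      intro h; nlinarith
  have c1 : (Su ∩ D).card ≤ A.card := Finset.card_le_card hsub1
  have c2 : B.card ≤ (D \ Su).card := Finset.card_le_card hsub2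
  omega

/-- Maximality: if `w` has all its `Z`-terms negative and `v` matches `w` in sign
off `Z`, then `N v ≤ N w`. -/
lemma cyclicN_le_max (Z : Fin n → Prop) (w v : Fin n → ℝ)
    (hw : ∀ i, w i ≠ 0) (hv : ∀ i, v i ≠ 0)
    (hmatch : ∀ i, ¬ Z i → 0 < w i * v i)
    (hneg : ∀ i, Z i → cyclicDelta n i * w i * w (i - 1) < 0) :
    cyclicN n v ≤ cyclicN n w := by
  set d := cyclicDelta n with hd
  set r : Fin n → ℝ := fun i => if 0 < w i * v i then 1 else -1 with hrdef
  have hr : ∀ i, r i = 1 ∨ r i = -1 := by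
    intro i; by_cases h : 0 < w i * v i <;> simp [hrdef, h]
  have hrm : ∀ i, (w i * v i) * r i > 0 := by
    intro i
    by_cases h : 0 < w i * v i
    · simp only [hrdef, if_pos h]; linarith
    · have hne : w i * v i ≠ 0 := mul_ne_zero (hw i) (hv i)
      have : w i * v i < 0 := lt_of_le_of_ne (not_lt.1 h) hne
      simp only [hrdef, if_neg h]; nlinarith
  have hrZ : ∀ i, r i = -1 → Z i := by
    intro i hri
    by_contra hZ
    have := hmatch i hZ
    simp [hrdef, if_pos this] at hri
    linarith
  -- sign relation
  have C : ∀ i, 0 < (d i * v i * v (i-1)) * (d i * w i * w (i-1)) * (r i * r (i-1)) := by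
    intro i
    have h1 := hrm i
    have h2 := hrm (i - 1)
    have hdd : 0 < d i * d i := by
      rcases (show d i = -1 ∨ d i = 1 by unfold d; unfold cyclicDelta; split <;> simp)
        with h | h <;> rw [h] <;> norm_num
    calc (0:ℝ) < (d i * d i) * ((w i * v i) * r i) * ((w (i-1) * v (i-1)) * r (i-1)) := by
          positivity
      _ = (d i * v i * v (i-1)) * (d i * w i * w (i-1)) * (r i * r (i-1)) := by ring
  rw [cyclicN_eq_card, cyclicN_eq_card]
  set Sw := Finset.univ.filter fun i => d i * w i * w (i-1) < 0 with hSw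
  set Sv := Finset.univ.filter fun i => d i * v i * v (i-1) < 0 with hSv
  set D := Finset.univ.filter fun i => r i * r (i-1) < 0 with hD
  have htw : ∀ i : Fin n, d i * w i * w (i-1) ≠ 0 := fun i =>
    mul_ne_zero (mul_ne_zero (cyclicDelta_ne i) (hw i)) (hw (i-1))
  have htv : ∀ i : Fin n, d i * v i * v (i-1) ≠ 0 := fun i =>
    mul_ne_zero (mul_ne_zero (cyclicDelta_ne i) (hv i)) (hv (i-1))
  have hmem : ∀ i, i ∈ Sv ↔ ((i ∈ Sw) ↔ (i ∉ D)) := by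
    intro i
    have hC := C i
    have h1 := htw i
    have h2 := htv i
    simp only [hSw, hSv, hD, Finset.mem_filter, Finset.mem_univ, true_and]
    rcases hr i with hi | hi <;> rcases hr (i-1) with hj | hj
    · have hrr : r i * r (i - 1) = 1 := by rw [hi, hj]; norm_num
      have hP : 0 < (d i * v i * v (i-1)) * (d i * w i * w (i-1)) := by nlinarith
      have heq : (d i * v i * v (i-1) < 0) ↔ (d i * w i * w (i-1) < 0) :=
        ⟨fun h => by nlinarith, fun h => by nlinarith⟩
      rw [hrr]; simp only [heq]; norm_num
    · have hrr : r i * r (i - 1) = -1 := by rw [hi, hj]; norm_num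
      have hN : (d i * v i * v (i-1)) * (d i * w i * w (i-1)) < 0 := by nlinarith
      have heq : (d i * v i * v (i-1) < 0) ↔ ¬(d i * w i * w (i-1) < 0) :=
        ⟨fun h h' => by nlinarith, fun h => by
          rcases lt_or_gt_of_ne h1 with h' | h'
          · exact absurd h' h
          · nlinarith⟩
      rw [hrr]; simp only [heq]; norm_num
    · have hrr : r i * r (i - 1) = -1 := by rw [hi, hj]; norm_num
      have hN : (d i * v i * v (i-1)) * (d i * w i * w (i-1)) < 0 := by nlinarith
      have heq : (d i * v i * v (i-1) < 0) ↔ ¬(d i * w i * w (i-1) < 0) :=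
        ⟨fun h h' => by nlinarith, fun h => by
          rcases lt_or_gt_of_ne h1 with h' | h'
          · exact absurd h' h
          · nlinarith⟩
      rw [hrr]; simp only [heq]; norm_num
    · have hrr : r i * r (i - 1) = 1 := by rw [hi, hj]; norm_num
      have hP : 0 < (d i * v i * v (i-1)) * (d i * w i * w (i-1)) := by nlinarith
      have heq : (d i * v i * v (i-1) < 0) ↔ (d i * w i * w (i-1) < 0) :=
        ⟨fun h => by nlinarith, fun h => by nlinarith⟩
      rw [hrr]; simp only [heq]; norm_num
  -- counting
  set A := Finset.univ.filter (fun i => r (i-1) < 0 ∧ 0 < r i) with hA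
  set B := Finset.univ.filter (fun i => 0 < r (i-1) ∧ r i < 0) with hB
  have hAB : A.card = B.card := card_up_eq_down r hr
  have hSv_eq : Sv = (Sw \ D) ∪ (D \ Sw) := by
    ext i
    have := hmem i
    simp only [Finset.mem_union, Finset.mem_sdiff] at *
    tauto
  have hdisj : Disjoint (Sw \ D) (D \ Sw) := by
    rw [Finset.disjoint_left]
    intro a ha hb
    exact (Finset.mem_sdiff.1 ha).2 (Finset.mem_sdiff.1 hb).1
  have hcv : Sv.card = (Sw \ D).card + (D \ Sw).card := by
    rw [hSv_eq, Finset.card_union_of_disjoint hdisj]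
  have hcu : (Sw ∩ D).card + (Sw \ D).card = Sw.card := Finset.card_inter_add_card_sdiff Sw D
  have hsub1 : D \ Sw ⊆ A := by
    intro i hi
    simp only [hSw, hD, hA, Finset.mem_sdiff, Finset.mem_filter, Finset.mem_univ,
      true_and] at *
    obtain ⟨hD', hw'⟩ := hi
    have hZ : ¬ Z i := fun h => hw' (hneg i h)
    have hri : r i = 1 := (hr i).resolve_right (fun h => hZ (hrZ i h))
    rw [hri] at hD'
    constructor
    · nlinarith
    · rw [hri]; norm_num
  have hsub2 : B ⊆ Sw ∩ D := by
    intro i hi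
    simp only [hSw, hD, hB, Finset.mem_inter, Finset.mem_filter, Finset.mem_univ,
      true_and] at *
    obtain ⟨hj, hi'⟩ := hi
    have hri : r i = -1 := (hr i).resolve_left (fun h => by rw [h] at hi'; norm_num at hi')
    exact ⟨hneg i (hrZ i hri), by nlinarith⟩
  have c1 : (D \ Sw).card ≤ A.card := Finset.card_le_card hsub1
  have c2 : B.card ≤ (Sw ∩ D).card := Finset.card_le_card hsub2
  omega

end Comb

section Topo
variable {n : ℕ} [NeZero n]

lemma term_sign_iff {dd a b a' b' : ℝ} (hdd : 0 < dd * dd) (h : 0 < a * a')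
    (h' : 0 < b * b') : (dd * a * b < 0) ↔ (dd * a' * b' < 0) := by
  have key : 0 < (dd * a * b) * (dd * a' * b') := by
    have : (dd * a * b) * (dd * a' * b') = (dd * dd) * (a * a') * (b * b') := by ring
    rw [this]
    exact mul_pos (mul_pos hdd h) h'
  constructor <;> intro hh <;> nlinarith

lemma cyclicDelta_sq_pos (i : Fin n) :
    0 < cyclicDelta n i * cyclicDelta n i := by
  rw [cyclicDelta_sq]; norm_num

/-- `N` is locally constant on `Λ`. -/
lemma eventually_const_of_lambda {y : Fin n → ℝ} (hy : y ∈ cyclicLambda n) :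
    ∀ᶠ z in 𝓝 y, z ∈ cyclicLambda n ∧ cyclicN n z = cyclicN n y := by
  have hU : IsOpen {z : Fin n → ℝ | ∀ i, 0 < z i * y i} := by
    have : {z : Fin n → ℝ | ∀ i, 0 < z i * y i}
        = ⋂ i, (fun z : Fin n → ℝ => z i * y i) ⁻¹' Set.Ioi 0 := by
      ext z; simp [Set.mem_iInter]
    rw [this]
    exact isOpen_iInter_of_finite fun i =>
      ((continuous_apply i).mul continuous_const).isOpen_preimage _ isOpen_Ioi
  have hyU : y ∈ {z : Fin n → ℝ | ∀ i, 0 < z i * y i} := fun i =>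
    mul_pos_iff.2 (by rcases lt_or_gt_of_ne (hy i) with h | h
                      · exact Or.inr ⟨h, h⟩
                      · exact Or.inl ⟨h, h⟩)
  filter_upwards [hU.mem_nhds hyU] with z hz
  have hzL : z ∈ cyclicLambda n := fun i => by
    intro h0; have := hz i; rw [h0] at this; simp at this
  refine ⟨hzL, ?_⟩
  classical
  rw [cyclicN_eq_card, cyclicN_eq_card]
  congr 1
  apply Finset.filter_congr
  intro i _
  simpa using term_sign_iff (cyclicDelta_sq_pos i) (hz i) (hz (i - 1))

lemma neBot_nhdsWithin_lambda {y : Fin n → ℝ} (hy : y ∈ cyclicLambda n) :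
    (𝓝[cyclicLambda n] y).NeBot :=
  mem_closure_iff_nhdsWithin_neBot.mp (subset_closure hy)

/-- On `Λ`, `N_m = N_M = N`; in particular `Λ ⊆ 𝒩`. -/
lemma lambda_subset_good {y : Fin n → ℝ} (hy : y ∈ cyclicLambda n) :
    y ∈ cyclicGood n ∧ cyclicNm n y = cyclicN n y := by
  haveI := neBot_nhdsWithin_lambda hy
  have hev : ∀ᶠ z in 𝓝[cyclicLambda n] y, cyclicN n z = cyclicN n y :=
    eventually_nhdsWithin_of_eventually_nhds
      ((eventually_const_of_lambda hy).mono fun z h => h.2)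
  have hS : {k | ∃ᶠ z in 𝓝[cyclicLambda n] y, cyclicN n z = k} = {cyclicN n y} := by
    ext k
    simp only [Set.mem_setOf_eq, Set.mem_singleton_iff]
    constructor
    · intro hf
      obtain ⟨z, h1, h2⟩ := (hf.and_eventually hev).exists
      rw [← h1, h2]
    · rintro rfl
      exact hev.frequently
  constructor
  · show cyclicNm n y = cyclicNM n y
    rw [cyclicNm, cyclicNM, hS, csInf_singleton, csSup_singleton]
  · rw [cyclicNm, hS, csInf_singleton]

/-- At any point, witnesses `u` (all zero-terms positive) and `w` (all zero-terms
negative) realizing frequent values compute `N_m` and `N_M`. -/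
lemma Nm_NM_of_witnesses (x₀ u w : Fin n → ℝ)
    (hu : ∀ i, u i ≠ 0) (hw : ∀ i, w i ≠ 0)
    (humatch : ∀ i, x₀ i ≠ 0 → 0 < u i * x₀ i)
    (hwmatch : ∀ i, x₀ i ≠ 0 → 0 < w i * x₀ i)
    (hupos : ∀ i, x₀ i = 0 → 0 < cyclicDelta n i * u i * u (i - 1))
    (hwneg : ∀ i, x₀ i = 0 → cyclicDelta n i * w i * w (i - 1) < 0)
    (hfu : ∃ᶠ z in 𝓝[cyclicLambda n] x₀, cyclicN n z = cyclicN n u)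
    (hfw : ∃ᶠ z in 𝓝[cyclicLambda n] x₀, cyclicN n z = cyclicN n w) :
    cyclicNm n x₀ = cyclicN n u ∧ cyclicNM n x₀ = cyclicN n w := by
  set Z : Fin n → Prop := fun i => x₀ i = 0 with hZ
  set U : Set (Fin n → ℝ) := {z | ∀ i, x₀ i ≠ 0 → 0 < z i * x₀ i} with hUdef
  have hUopen : IsOpen U := by
    have : U = ⋂ i, {z : Fin n → ℝ | x₀ i ≠ 0 → 0 < z i * x₀ i} := by
      ext z; simp [hUdef, Set.mem_iInter]
    rw [this]
    refine isOpen_iInter_of_finite fun i => ?_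
    by_cases h : x₀ i = 0
    · simp only [h, ne_eq, not_true_eq_false, false_implies]
      exact isOpen_const.mono (by simp) |>.mono (le_refl _) |>.mono (le_refl _)
    · have : {z : Fin n → ℝ | x₀ i ≠ 0 → 0 < z i * x₀ i}
          = (fun z : Fin n → ℝ => z i * x₀ i) ⁻¹' Set.Ioi 0 := by
        ext z; simp [h]
      rw [this]
      exact ((continuous_apply i).mul continuous_const).isOpen_preimage _ isOpen_Ioi
  have hx₀U : x₀ ∈ U := fun i hi => by
    rcases lt_or_gt_of_ne hi with h | h
    · exact mul_pos_of_neg_of_neg h h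
    · exact mul_pos h h
  have hevU : ∀ᶠ z in 𝓝[cyclicLambda n] x₀, z ∈ U :=
    eventually_nhdsWithin_of_eventually_nhds (hUopen.mem_nhds hx₀U)
  have hevL : ∀ᶠ z in 𝓝[cyclicLambda n] x₀, z ∈ cyclicLambda n :=
    eventually_mem_nhdsWithin
  -- every frequent value is between N u and N w
  have hbound : ∀ k ∈ {k | ∃ᶠ z in 𝓝[cyclicLambda n] x₀, cyclicN n z = k},
      cyclicN n u ≤ k ∧ k ≤ cyclicN n w := by
    intro k hk
    obtain ⟨z, hzk, hzU, hzL⟩ := (hk.and_eventually (hevU.and hevL)).exists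
    have hzmatchu : ∀ i, ¬ Z i → 0 < u i * z i := by
      intro i hi
      have h1 := humatch i hi
      have h2 := hzU i hi
      have hne : x₀ i ≠ 0 := hi
      nlinarith [sq_nonneg (x₀ i)]
    have hzmatchw : ∀ i, ¬ Z i → 0 < w i * z i := by
      intro i hi
      have h1 := hwmatch i hi
      have h2 := hzU i hi
      nlinarith [sq_nonneg (x₀ i)]
    constructor
    · rw [← hzk]; exact cyclicN_min_le Z u z hu hzL hzmatchu hupos
    · rw [← hzk]; exact cyclicN_le_max Z w z hw hzL hzmatchw hwneg
  have hmemu : cyclicN n u ∈ {k | ∃ᶠ z in 𝓝[cyclicLambda n] x₀, cyclicN n z = k} := hfu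
  have hmemw : cyclicN n w ∈ {k | ∃ᶠ z in 𝓝[cyclicLambda n] x₀, cyclicN n z = k} := hfw
  constructor
  · rw [cyclicNm]
    exact le_antisymm (Nat.sInf_le hmemu) (le_csInf ⟨_, hmemu⟩ fun k hk => (hbound k hk).1)
  · rw [cyclicNM]
    refine le_antisymm (csSup_le ⟨_, hmemw⟩ fun k hk => (hbound k hk).2)
      (le_csSup ⟨cyclicN n w, fun k hk => (hbound k hk).2⟩ hmemw)

end Topo

section Anal
variable {n : ℕ} [NeZero n] {S : LinCNF n} {x : ℝ → Fin n → ℝ}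

lemma sol_cont (hsol : S.IsSolution x) (i : Fin n) : Continuous fun t => x t i :=
  continuous_iff_continuousAt.2 fun t => (hsol t i).continuousAt

/-- The coefficient bound on a compact interval. -/
lemma coeff_bound (S : LinCNF n) (a b : ℝ) :
    ∃ C : ℝ, 0 ≤ C ∧ ∀ s ∈ Set.Icc a b, ∀ i, |S.diag s i| ≤ C ∧ |S.sub s i| ≤ C := by
  have hF : Continuous fun s => ((fun i => S.diag s i, fun i => S.sub s i) :
      (Fin n → ℝ) × (Fin n → ℝ)) :=
    Continuous.prodMk (continuous_pi fun i => S.cont_diag i)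
      (continuous_pi fun i => S.cont_sub i)
  obtain ⟨C, hC⟩ := isCompact_Icc.exists_bound_of_continuousOn
    (s := Set.Icc a b) hF.continuousOn
  refine ⟨max C 0, le_max_right _ _, fun s hs i => ?_⟩
  have h := hC s hs
  set P : (Fin n → ℝ) × (Fin n → ℝ) := (fun i => S.diag s i, fun i => S.sub s i) with hP
  constructor
  · calc |S.diag s i| = ‖P.1 i‖ := rfl
      _ ≤ ‖P.1‖ := norm_le_pi_norm P.1 i
      _ ≤ ‖P‖ := norm_fst_le P
      _ ≤ max C 0 := le_max_of_le_left h
  · calc |S.sub s i| = ‖P.2 i‖ := rfl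
      _ ≤ ‖P.2‖ := norm_le_pi_norm P.2 i
      _ ≤ ‖P‖ := norm_snd_le P
      _ ≤ max C 0 := le_max_of_le_left h

/-- A solution vanishing at a point vanishes identically. -/
lemma sol_zero_of_zero (hsol : S.IsSolution x) {a : ℝ} (ha : x a = 0) : ∀ t, x t = 0 := by
  have hx' : ∀ t, HasDerivAt x (fun i => S.diag t i * x t i + S.sub t i * x t (i - 1)) t :=
    fun t => hasDerivAt_pi.2 fun i => hsol t i
  have hxc : Continuous x := continuous_pi fun i => sol_cont hsol i
  -- forward propagation
  have fwd : ∀ b, a ≤ b → x b = 0 := by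
    intro b hab
    obtain ⟨C, hC0, hC⟩ := coeff_bound S a b
    have key : ∀ t ∈ Set.Icc a b, ‖x t‖ ≤ gronwallBound 0 (2*C) 0 (t - a) := by
      apply norm_le_gronwallBound_of_norm_deriv_right_le hxc.continuousOn
        (fun t ht => (hx' t).hasDerivWithinAt) (by simp [ha])
      intro t ht
      have h0 : (0:ℝ) ≤ 2 * C * ‖x t‖ + 0 := by
        have := norm_nonneg (x t); nlinarith
      refine (pi_norm_le_iff_of_nonneg h0).2 fun i => ?_
      have hti := hC t (Set.mem_Icc_of_Ico ht) i
      have hb1 : ‖x t i‖ ≤ ‖x t‖ := norm_le_pi_norm (x t) i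
      have hb2 : ‖x t (i-1)‖ ≤ ‖x t‖ := norm_le_pi_norm (x t) (i-1)
      rw [Real.norm_eq_abs] at hb1 hb2 ⊢
      calc |S.diag t i * x t i + S.sub t i * x t (i - 1)|
          ≤ |S.diag t i * x t i| + |S.sub t i * x t (i - 1)| := abs_add_le _ _
        _ = |S.diag t i| * |x t i| + |S.sub t i| * |x t (i-1)| := by rw [abs_mul, abs_mul]
        _ ≤ C * ‖x t‖ + C * ‖x t‖ := add_le_add
              (mul_le_mul hti.1 hb1 (abs_nonneg _) hC0)
              (mul_le_mul hti.2 hb2 (abs_nonneg _) hC0)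
        _ = 2 * C * ‖x t‖ + 0 := by ring
    have := key b ⟨hab, le_refl b⟩
    rw [gronwallBound_ε0] at this
    simpa using norm_le_zero_iff.1 (by simpa using this)
  -- backward propagation
  have bwd : ∀ b, b ≤ a → x b = 0 := by
    intro b hba
    set y : ℝ → Fin n → ℝ := fun s => x (a + b - s) with hy
    obtain ⟨C, hC0, hC⟩ := coeff_bound S b a
    have hyderiv : ∀ s, HasDerivAt y
        ((-1 : ℝ) • fun i => S.diag (a+b-s) i * x (a+b-s) i
            + S.sub (a+b-s) i * x (a+b-s) (i - 1)) s := by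
      intro s
      have hh : HasDerivAt (fun s : ℝ => a + b - s) (-1) s := by
        simpa using (hasDerivAt_id s).const_sub (a + b)
      exact HasDerivAt.scomp s (hx' (a+b-s)) hh
    have hyc : Continuous y := hxc.comp (by continuity)
    have key : ∀ t ∈ Set.Icc b a, ‖y t‖ ≤ gronwallBound 0 (2*C) 0 (t - b) := by
      apply norm_le_gronwallBound_of_norm_deriv_right_le hyc.continuousOn
        (fun t ht => (hyderiv t).hasDerivWithinAt) (by simp [hy, ha])
      intro t ht
      have harg : a + b - t ∈ Set.Icc b a := by
        constructor <;> [linarith [ht.2]; linarith [ht.1]]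
      have h0 : (0:ℝ) ≤ 2 * C * ‖y t‖ + 0 := by
        have := norm_nonneg (y t); nlinarith
      rw [norm_smul, norm_neg, norm_one, one_mul]
      refine (pi_norm_le_iff_of_nonneg h0).2 fun i => ?_
      have hti := hC (a+b-t) harg i
      have hb1 : ‖y t i‖ ≤ ‖y t‖ := norm_le_pi_norm (y t) i
      have hb2 : ‖y t (i-1)‖ ≤ ‖y t‖ := norm_le_pi_norm (y t) (i-1)
      rw [Real.norm_eq_abs] at hb1 hb2 ⊢
      have hyt : y t = x (a+b-t) := rfl
      rw [hyt] at hb1 hb2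
      calc |S.diag (a+b-t) i * x (a+b-t) i + S.sub (a+b-t) i * x (a+b-t) (i - 1)|
          ≤ |S.diag (a+b-t) i * x (a+b-t) i| + |S.sub (a+b-t) i * x (a+b-t) (i - 1)| :=
            abs_add_le _ _
        _ = |S.diag (a+b-t) i| * |x (a+b-t) i| + |S.sub (a+b-t) i| * |x (a+b-t) (i-1)| := by
            rw [abs_mul, abs_mul]
        _ ≤ C * ‖y t‖ + C * ‖y t‖ := add_le_add
              (mul_le_mul hti.1 hb1 (abs_nonneg _) hC0)
              (mul_le_mul hti.2 hb2 (abs_nonneg _) hC0)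
        _ = 2 * C * ‖y t‖ + 0 := by ring
    have := key a ⟨hba, le_refl a⟩
    rw [gronwallBound_ε0] at this
    have : ‖y a‖ ≤ 0 := by simpa using this
    simpa [hy] using norm_le_zero_iff.1 this
  intro t
  rcases le_total a t with h | h
  · exact fwd t h
  · exact bwd t h

/-- A continuous nonvanishing function has constant sign on an interval. -/
lemma sign_const {f : ℝ → ℝ} (hf : Continuous f) {a b : ℝ}
    (h : ∀ s ∈ Set.Ioo a b, f s ≠ 0) :
    ∀ s ∈ Set.Ioo a b, ∀ t ∈ Set.Ioo a b, 0 < f s * f t := by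
  have key : ∀ s ∈ Set.Ioo a b, ∀ t ∈ Set.Ioo a b, s ≤ t → 0 < f s * f t := by
    intro s hs t ht hst
    rcases lt_or_gt_of_ne (h s hs) with h1 | h1 <;>
      rcases lt_or_gt_of_ne (h t ht) with h2 | h2
    · exact mul_pos_of_neg_of_neg h1 h2
    · exfalso
      obtain ⟨c, hc, hc0⟩ := intermediate_value_Ioo hst hf.continuousOn ⟨h1, h2⟩
      exact h c ⟨hs.1.trans hc.1, hc.2.trans ht.2⟩ hc0
    · exfalso
      obtain ⟨c, hc, hc0⟩ := intermediate_value_Ioo' hst hf.continuousOn ⟨h2, h1⟩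
      exact h c ⟨hs.1.trans hc.1, hc.2.trans ht.2⟩ hc0
    · exact mul_pos h1 h2
  intro s hs t ht
  rcases le_total s t with hst | hst
  · exact key s hs t ht hst
  · have := key t ht s hs hst; nlinarith

lemma delta_sub_pos (S : LinCNF n) (i : Fin n) (s : ℝ) :
    0 < cyclicDelta n i * S.sub s i := by
  unfold cyclicDelta
  by_cases h : i = 0
  · subst h
    rw [if_pos rfl]
    have := S.sub_neg s; nlinarith
  · rw [if_neg h, one_mul]; exact S.sub_pos s i h

/-- One-step sign propagation through a zero coordinate via the integral formula. -/
lemma step_sign (hsol : S.IsSolution x) {t₀ : ℝ} {i : Fin n} (hz : x t₀ i = 0)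
    {ε : ℝ} (hε : 0 < ε)
    (hp : ∀ t ∈ Set.Ioo t₀ (t₀ + ε), x t (i - 1) ≠ 0)
    (hm : ∀ t ∈ Set.Ioo (t₀ - ε) t₀, x t (i - 1) ≠ 0) :
    (∀ t ∈ Set.Ioo t₀ (t₀ + ε), 0 < cyclicDelta n i * x t i * x t (i - 1)) ∧
    (∀ t ∈ Set.Ioo (t₀ - ε) t₀, cyclicDelta n i * x t i * x t (i - 1) < 0) := by
  set A : ℝ → ℝ := fun t => ∫ s in t₀..t, S.diag s i with hA
  have hAderiv : ∀ t, HasDerivAt A (S.diag t i) t := by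
    intro t
    exact intervalIntegral.integral_hasDerivAt_right
      ((S.cont_diag i).intervalIntegrable _ _)
      ((S.cont_diag i).stronglyMeasurableAtFilter _ _)
      (S.cont_diag i).continuousAt
  have hAcont : Continuous A := continuous_iff_continuousAt.2 fun t =>
    (hAderiv t).continuousAt
  set g : ℝ → ℝ := fun s => Real.exp (-A s) * (S.sub s i * x s (i - 1)) with hg
  have hgcont : Continuous g :=
    (hAcont.neg.rexp).mul ((S.cont_sub i).mul (sol_cont hsol (i - 1)))
  set F : ℝ → ℝ := fun t => Real.exp (-A t) * x t i with hF
  have hFderiv : ∀ t, HasDerivAt F (g t) t := by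
    intro t
    have h1 : HasDerivAt (fun t => Real.exp (-A t)) (Real.exp (-A t) * (-S.diag t i)) t :=
      ((hAderiv t).neg).exp
    have h2 : HasDerivAt (fun s => Real.exp (-A s) * x s i) (Real.exp (-A t) * -S.diag t i * x t i
        + Real.exp (-A t) * (S.diag t i * x t i + S.sub t i * x t (i - 1))) t :=
      (h1.mul (hsol t i))
    convert h2 using 1
    simp only [hg]
    ring
  have hint : ∀ t, x t i = Real.exp (A t) * ∫ s in t₀..t, g s := by
    intro t
    have hftc : ∫ s in t₀..t, g s = F t - F t₀ :=
      intervalIntegral.integral_eq_sub_of_hasDerivAt (fun s _ => hFderiv s)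
        (hgcont.intervalIntegrable _ _)
    have hF0 : F t₀ = 0 := by simp [hF, hz]
    rw [hftc, hF0, sub_zero, hF]
    rw [← mul_assoc, ← Real.exp_add]
    simp
  constructor
  · intro t ht
    set c : ℝ := cyclicDelta n i * x t (i - 1) with hc
    have hpos : ∀ s ∈ Set.Ioo t₀ t, 0 < g s * c := by
      intro s hs
      have hs' : s ∈ Set.Ioo t₀ (t₀ + ε) := ⟨hs.1, hs.2.trans ht.2⟩
      have hsign := sign_const (sol_cont hsol (i - 1)) hp s hs' t ht
      have hds := delta_sub_pos S i s
      have he := Real.exp_pos (-A s)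
      calc (0:ℝ) < Real.exp (-A s) * (cyclicDelta n i * S.sub s i)
            * (x s (i - 1) * x t (i - 1)) := by positivity
        _ = g s * c := by simp only [hg, hc]; ring
    have hI : 0 < (∫ s in t₀..t, g s) * c := by
      rw [← intervalIntegral.integral_mul_const]
      exact intervalIntegral.intervalIntegral_pos_of_pos_on
        ((hgcont.mul continuous_const).intervalIntegrable _ _) hpos ht.1
    have hxt := hint t
    have : cyclicDelta n i * x t i * x t (i - 1)
        = Real.exp (A t) * ((∫ s in t₀..t, g s) * c) := by
      rw [hxt, hc]; ring
    rw [this]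
    exact mul_pos (Real.exp_pos _) hI
  · intro t ht
    set c : ℝ := cyclicDelta n i * x t (i - 1) with hc
    have hpos : ∀ s ∈ Set.Ioo t t₀, 0 < g s * c := by
      intro s hs
      have hs' : s ∈ Set.Ioo (t₀ - ε) t₀ := ⟨ht.1.trans hs.1, hs.2⟩
      have hsign := sign_const (sol_cont hsol (i - 1)) hm s hs' t ht
      have hds := delta_sub_pos S i s
      have he := Real.exp_pos (-A s)
      calc (0:ℝ) < Real.exp (-A s) * (cyclicDelta n i * S.sub s i)
            * (x s (i - 1) * x t (i - 1)) := by positivity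
        _ = g s * c := by simp only [hg, hc]; ring
    have hI : 0 < (∫ s in t..t₀, g s) * c := by
      rw [← intervalIntegral.integral_mul_const]
      exact intervalIntegral.intervalIntegral_pos_of_pos_on
        ((hgcont.mul continuous_const).intervalIntegrable _ _) hpos ht.2
    have hxt := hint t
    have : cyclicDelta n i * x t i * x t (i - 1)
        = -(Real.exp (A t) * ((∫ s in t..t₀, g s) * c)) := by
      rw [hxt, hc, intervalIntegral.integral_symm t t₀]; ring
    rw [this]
    have := mul_pos (Real.exp_pos (A t)) hI
    linarith

/-- Property of index `i` on punctured `ε`-intervals around `t₀`. -/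
def SignProp (S : LinCNF n) (x : ℝ → Fin n → ℝ) (t₀ : ℝ) (i : Fin n) (ε : ℝ) : Prop :=
  (∀ t ∈ Set.Ioo t₀ (t₀ + ε), x t i ≠ 0 ∧
      (x t₀ i = 0 → 0 < cyclicDelta n i * x t i * x t (i - 1)) ∧
      (x t₀ i ≠ 0 → 0 < x t i * x t₀ i)) ∧
  (∀ t ∈ Set.Ioo (t₀ - ε) t₀, x t i ≠ 0 ∧
      (x t₀ i = 0 → cyclicDelta n i * x t i * x t (i - 1) < 0) ∧
      (x t₀ i ≠ 0 → 0 < x t i * x t₀ i))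

lemma signProp_mono {t₀ : ℝ} {i : Fin n} {ε ε' : ℝ} (h : ε' ≤ ε)
    (hp : SignProp S x t₀ i ε) : SignProp S x t₀ i ε' := by
  refine ⟨fun t ht => hp.1 t ⟨ht.1, by linarith [ht.2]⟩,
    fun t ht => hp.2 t ⟨by linarith [ht.1], ht.2⟩⟩

lemma signProp_base (hsol : S.IsSolution x) {t₀ : ℝ} {i : Fin n} (hi : x t₀ i ≠ 0) :
    ∃ ε > 0, SignProp S x t₀ i ε := by
  have hc : ContinuousAt (fun t => x t i * x t₀ i) t₀ :=
    ((sol_cont hsol i).mul continuous_const).continuousAt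
  have hpos : (0:ℝ) < x t₀ i * x t₀ i := by
    rcases lt_or_gt_of_ne hi with h | h
    · exact mul_pos_of_neg_of_neg h h
    · exact mul_pos h h
  have hev : ∀ᶠ t in 𝓝 t₀, 0 < x t i * x t₀ i := hc.eventually (lt_mem_nhds hpos)
  obtain ⟨ε, hε, hball⟩ := Metric.eventually_nhds_iff.1 hev
  refine ⟨ε, hε, fun t ht => ?_, fun t ht => ?_⟩ <;>
  · have hd : dist t t₀ < ε := by
      rw [Real.dist_eq, abs_sub_lt_iff]
      constructor <;> [linarith [ht.1, ht.2]; linarith [ht.1, ht.2]]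
    have h2 := hball hd
    exact ⟨fun h0 => by rw [h0] at h2; simp at h2, fun h0 => absurd h0 hi, fun _ => h2⟩

lemma signProp_step (hsol : S.IsSolution x) {t₀ : ℝ} {i : Fin n} (hi : x t₀ i = 0)
    {ε : ℝ} (hε : 0 < ε) (hprev : SignProp S x t₀ (i - 1) ε) :
    SignProp S x t₀ i ε := by
  have hp : ∀ t ∈ Set.Ioo t₀ (t₀ + ε), x t (i - 1) ≠ 0 := fun t ht => (hprev.1 t ht).1
  have hm : ∀ t ∈ Set.Ioo (t₀ - ε) t₀, x t (i - 1) ≠ 0 := fun t ht => (hprev.2 t ht).1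
  obtain ⟨h1, h2⟩ := step_sign hsol hi hε hp hm
  constructor
  · intro t ht
    have := h1 t ht
    refine ⟨fun h0 => by rw [h0] at this; simp at this, fun _ => this,
      fun h0 => absurd hi h0⟩
  · intro t ht
    have := h2 t ht
    refine ⟨fun h0 => by rw [h0] at this; simp at this, fun _ => this,
      fun h0 => absurd hi h0⟩

open scoped Fin.NatCast Fin.CommRing in
/-- Master lemma: uniform punctured-interval sign structure around any time. -/
lemma sign_structure (hsol : S.IsSolution x) (t₀ : ℝ) (hx0 : x t₀ ≠ 0) :
    ∃ ε > 0, ∀ i, SignProp S x t₀ i ε := by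
  obtain ⟨i₀, hi₀⟩ := Function.ne_iff.1 hx0
  have claim : ∀ k : ℕ, ∃ ε > 0, ∀ j : ℕ, j ≤ k → SignProp S x t₀ (i₀ + (j : Fin n)) ε := by
    intro k
    induction k with
    | zero =>
      obtain ⟨ε, hε, hP⟩ := signProp_base hsol hi₀
      exact ⟨ε, hε, fun j hj => by
        interval_cases j
        simpa using hP⟩
    | succ k ih =>
      obtain ⟨ε₁, hε₁, hP₁⟩ := ih
      set i : Fin n := i₀ + ((k+1 : ℕ) : Fin n) with hidef
      have hpred : i - 1 = i₀ + (k : Fin n) := by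
        rw [hidef]
        push_cast
        ring
      by_cases hz : x t₀ i = 0
      · refine ⟨ε₁, hε₁, fun j hj => ?_⟩
        rcases Nat.lt_or_ge j (k+1) with h | h
        · exact hP₁ j (by omega)
        · have : j = k + 1 := by omega
          subst this
          have hprev : SignProp S x t₀ (i - 1) ε₁ := by
            rw [hpred]; exact hP₁ k (le_refl k)
          exact signProp_step hsol hz hε₁ hprev
      · obtain ⟨ε₂, hε₂, hP₂⟩ := signProp_base hsol hz
        refine ⟨min ε₁ ε₂, lt_min hε₁ hε₂, fun j hj => ?_⟩
        rcases Nat.lt_or_ge j (k+1) with h | h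
        · exact signProp_mono (min_le_left _ _) (hP₁ j (by omega))
        · have : j = k + 1 := by omega
          subst this
          exact signProp_mono (min_le_right _ _) hP₂
  obtain ⟨ε, hε, hP⟩ := claim (n - 1)
  refine ⟨ε, hε, fun i => ?_⟩
  have : i = i₀ + (((i - i₀ : Fin n).val : ℕ) : Fin n) := by
    rw [Fin.cast_val_eq_self]
    exact (add_sub_cancel i₀ i).symm
  rw [this]
  exact hP _ (by have := (i - i₀).isLt; omega)

end Anal

/-- If `x(t₀) ∉ 𝒩` then for all small `ε > 0` one has
`x(t₀ ± ε) ∈ 𝒩` and `N(x(t₀ + ε)) < N(x(t₀ − ε))`. -/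
theorem stmt1 (n : ℕ) [NeZero n] (hn : 2 ≤ n) (S : LinCNF n) (x : ℝ → Fin n → ℝ)
    (hsol : S.IsSolution x) (hnontriv : ¬ ∀ t, x t = 0)
    (t₀ : ℝ) (h₀ : x t₀ ∉ cyclicGood n) :
    ∃ ε₀ > (0 : ℝ), ∀ ε : ℝ, 0 < ε → ε < ε₀ →
      x (t₀ + ε) ∈ cyclicGood n ∧ x (t₀ - ε) ∈ cyclicGood n ∧
      cyclicNm n (x (t₀ + ε)) < cyclicNm n (x (t₀ - ε)) := by
  classical
  have hx0 : x t₀ ≠ 0 := fun h => hnontriv (sol_zero_of_zero hsol h)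
  obtain ⟨ε₀, hε₀, hP⟩ := sign_structure hsol t₀ hx0
  set Z : Fin n → Prop := fun i => x t₀ i = 0 with hZdef
  have hmidp : t₀ + ε₀ / 2 ∈ Set.Ioo t₀ (t₀ + ε₀) := by constructor <;> linarith
  have hmidm : t₀ - ε₀ / 2 ∈ Set.Ioo (t₀ - ε₀) t₀ := by constructor <;> linarith
  -- uniform facts on the two punctured intervals
  have hplus : ∀ t ∈ Set.Ioo t₀ (t₀ + ε₀), (∀ i, x t i ≠ 0) ∧
      (∀ i, Z i → 0 < cyclicDelta n i * x t i * x t (i - 1)) ∧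
      (∀ i, ¬ Z i → 0 < x t i * x t₀ i) := by
    intro t ht
    exact ⟨fun i => ((hP i).1 t ht).1, fun i hi => ((hP i).1 t ht).2.1 hi,
      fun i hi => ((hP i).1 t ht).2.2 hi⟩
  have hminus : ∀ t ∈ Set.Ioo (t₀ - ε₀) t₀, (∀ i, x t i ≠ 0) ∧
      (∀ i, Z i → cyclicDelta n i * x t i * x t (i - 1) < 0) ∧
      (∀ i, ¬ Z i → 0 < x t i * x t₀ i) := by
    intro t ht
    exact ⟨fun i => ((hP i).2 t ht).1, fun i hi => ((hP i).2 t ht).2.1 hi,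
      fun i hi => ((hP i).2 t ht).2.2 hi⟩
  obtain ⟨hu, hupos, humatch⟩ := hplus _ hmidp
  obtain ⟨hw, hwneg, hwmatch⟩ := hminus _ hmidm
  -- matching of signs off Z between two points on the same side (or across sides)
  have hpair : ∀ y z : ℝ → Fin n → ℝ, ∀ a b : ℝ,
      (∀ i, ¬ Z i → 0 < y a i * x t₀ i) → (∀ i, ¬ Z i → 0 < z b i * x t₀ i) →
      ∀ i, ¬ Z i → 0 < y a i * z b i := by
    intro y z a b h1 h2 i hi
    have ha := h1 i hi
    have hb := h2 i hi
    have hc2 : 0 < x t₀ i * x t₀ i := by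
      rcases lt_or_gt_of_ne (show x t₀ i ≠ 0 from hi) with h | h
      · exact mul_pos_of_neg_of_neg h h
      · exact mul_pos h h
    nlinarith [mul_pos ha hb]
  -- constancy of N on each side
  have hNplus : ∀ t ∈ Set.Ioo t₀ (t₀ + ε₀), cyclicN n (x t) = cyclicN n (x (t₀ + ε₀ / 2)) := by
    intro t ht
    obtain ⟨h1, h2, h3⟩ := hplus t ht
    exact le_antisymm
      (cyclicN_min_le Z (x t) (x (t₀ + ε₀ / 2)) h1 hu
        (hpair x x t (t₀ + ε₀/2) h3 humatch) h2)
      (cyclicN_min_le Z (x (t₀ + ε₀ / 2)) (x t) hu h1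
        (hpair x x (t₀ + ε₀/2) t humatch h3) hupos)
  have hNminus : ∀ t ∈ Set.Ioo (t₀ - ε₀) t₀, cyclicN n (x t) = cyclicN n (x (t₀ - ε₀ / 2)) := by
    intro t ht
    obtain ⟨h1, h2, h3⟩ := hminus t ht
    exact le_antisymm
      (cyclicN_le_max Z (x (t₀ - ε₀ / 2)) (x t) hw h1
        (hpair x x (t₀ - ε₀/2) t hwmatch h3) hwneg)
      (cyclicN_le_max Z (x t) (x (t₀ - ε₀ / 2)) h1 hw
        (hpair x x t (t₀ - ε₀/2) h3 hwmatch) h2)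
  -- frequently realized values at x t₀
  have hcont : Continuous x := continuous_pi fun i => sol_cont hsol i
  have htendp : Tendsto x (𝓝[>] t₀) (𝓝[cyclicLambda n] (x t₀)) := by
    rw [tendsto_nhdsWithin_iff]
    refine ⟨(hcont.tendsto t₀).mono_left nhdsWithin_le_nhds, ?_⟩
    filter_upwards [Ioo_mem_nhdsGT_of_mem (show t₀ ∈ Set.Ico t₀ (t₀ + ε₀) from ⟨le_refl t₀, by linarith⟩)] with t ht
    exact (hplus t ht).1
  have htendm : Tendsto x (𝓝[<] t₀) (𝓝[cyclicLambda n] (x t₀)) := by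
    rw [tendsto_nhdsWithin_iff]
    refine ⟨(hcont.tendsto t₀).mono_left nhdsWithin_le_nhds, ?_⟩
    filter_upwards [Ioo_mem_nhdsLT_of_mem (show t₀ ∈ Set.Ioc (t₀ - ε₀) t₀ from ⟨by linarith, le_refl t₀⟩)] with t ht
    exact (hminus t ht).1
  have hfu : ∃ᶠ z in 𝓝[cyclicLambda n] (x t₀), cyclicN n z = cyclicN n (x (t₀ + ε₀ / 2)) := by
    apply htendp.frequently
    apply Filter.Eventually.frequently
    filter_upwards [Ioo_mem_nhdsGT_of_mem (show t₀ ∈ Set.Ico t₀ (t₀ + ε₀) from ⟨le_refl t₀, by linarith⟩)] with t ht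
    exact hNplus t ht
  have hfw : ∃ᶠ z in 𝓝[cyclicLambda n] (x t₀), cyclicN n z = cyclicN n (x (t₀ - ε₀ / 2)) := by
    apply htendm.frequently
    apply Filter.Eventually.frequently
    filter_upwards [Ioo_mem_nhdsLT_of_mem (show t₀ ∈ Set.Ioc (t₀ - ε₀) t₀ from ⟨by linarith, le_refl t₀⟩)] with t ht
    exact hNminus t ht
  obtain ⟨hNm, hNM⟩ := Nm_NM_of_witnesses (x t₀) (x (t₀ + ε₀ / 2)) (x (t₀ - ε₀ / 2))
    hu hw humatch hwmatch hupos hwneg hfu hfw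
  have hle : cyclicN n (x (t₀ + ε₀ / 2)) ≤ cyclicN n (x (t₀ - ε₀ / 2)) :=
    cyclicN_min_le Z _ _ hu hw (hpair x x (t₀ + ε₀/2) (t₀ - ε₀/2) humatch hwmatch) hupos
  have hne : cyclicN n (x (t₀ + ε₀ / 2)) ≠ cyclicN n (x (t₀ - ε₀ / 2)) := by
    intro h
    exact h₀ (show cyclicNm n (x t₀) = cyclicNM n (x t₀) by rw [hNm, hNM, h])
  have hlt := lt_of_le_of_ne hle hne
  refine ⟨ε₀, hε₀, fun ε hε hεlt => ?_⟩
  have htp : t₀ + ε ∈ Set.Ioo t₀ (t₀ + ε₀) := by constructor <;> linarith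
  have htm : t₀ - ε ∈ Set.Ioo (t₀ - ε₀) t₀ := by constructor <;> linarith
  have hLp : x (t₀ + ε) ∈ cyclicLambda n := (hplus _ htp).1
  have hLm : x (t₀ - ε) ∈ cyclicLambda n := (hminus _ htm).1
  obtain ⟨hgoodp, hNmp⟩ := lambda_subset_good hLp
  obtain ⟨hgoodm, hNmm⟩ := lambda_subset_good hLm
  refine ⟨hgoodp, hgoodm, ?_⟩
  rw [hNmp, hNmm, hNplus _ htp, hNminus _ htm]
  exact hlt
end

section
/- Let x(t) be a nontrivial solution of the linear cyclic negative feedback system. Then there exist t₀ > 0 and integers N₊, N₋ such that x(t) ∈ 𝒩 with N(x(t)) = N₊ for all t ≥ t₀, and x(t) ∈ 𝒩 with N(x(t)) = N₋ for all t ≤ −t₀. -/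
open Filter Topology
open Fin.NatCast
open Fin.CommRing

namespace Stmt2Aux
open Finset

attribute [local instance] Classical.propDecidable

variable {n : ℕ} [NeZero n]

/-- total sign function -/
noncomputable def sgn (r : ℝ) : ℝ := if 0 < r then 1 else -1

lemma sgn_unit (r : ℝ) : sgn r = 1 ∨ sgn r = -1 := by
  unfold sgn; split <;> simp

lemma sgn_mul_pos {r : ℝ} (h : r ≠ 0) : 0 < sgn r * r := by
  unfold sgn
  rcases h.lt_or_gt with h' | h'
  · rw [if_neg (not_lt.2 h'.le)]; nlinarith
  · rw [if_pos h']; nlinarith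

lemma unit_sq {a : ℝ} (h : a = 1 ∨ a = -1) : a * a = 1 := by
  rcases h with h | h <;> rw [h] <;> norm_num

lemma unit_ne_zero {a : ℝ} (h : a = 1 ∨ a = -1) : a ≠ 0 := by
  rcases h with h | h <;> rw [h] <;> norm_num

lemma delta_unit (i : Fin n) : cyclicDelta n i = 1 ∨ cyclicDelta n i = -1 := by
  unfold cyclicDelta; split <;> simp

lemma exists_nonzero_shift (z : Fin n → ℝ) (hz : z ≠ 0) (i : Fin n) :
    ∃ k : ℕ, z (i - (k : Fin n)) ≠ 0 := by
  obtain ⟨j, hj⟩ := Function.ne_iff.1 hz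
  refine ⟨((i - j : Fin n) : ℕ), ?_⟩
  rw [Fin.cast_val_eq_self]
  simpa using hj

/-- depth: number of backward steps to reach a nonzero coordinate -/
noncomputable def dpt (z : Fin n → ℝ) (hz : z ≠ 0) (i : Fin n) : ℕ :=
  Nat.find (exists_nonzero_shift z hz i)

lemma dpt_spec (z : Fin n → ℝ) (hz : z ≠ 0) (i : Fin n) :
    z (i - ((dpt z hz i : ℕ) : Fin n)) ≠ 0 :=
  Nat.find_spec (exists_nonzero_shift z hz i)

lemma dpt_min (z : Fin n → ℝ) (hz : z ≠ 0) (i : Fin n) {k : ℕ} (hk : k < dpt z hz i) :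
    z (i - (k : Fin n)) = 0 := by
  have := Nat.find_min (exists_nonzero_shift z hz i) hk
  simpa using this

lemma dpt_eq_zero (z : Fin n → ℝ) (hz : z ≠ 0) {i : Fin n} (h : z i ≠ 0) :
    dpt z hz i = 0 := by
  have : z (i - ((0:ℕ) : Fin n)) ≠ 0 := by simpa using h
  exact Nat.eq_zero_of_le_zero (Nat.find_le this)

lemma dpt_lt (z : Fin n → ℝ) (hz : z ≠ 0) (i : Fin n) : dpt z hz i < n := by
  obtain ⟨j, hj⟩ := Function.ne_iff.1 hz
  have h : z (i - (((i - j : Fin n) : ℕ) : Fin n)) ≠ 0 := by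
    rw [Fin.cast_val_eq_self]; simpa using hj
  calc dpt z hz i ≤ ((i - j : Fin n) : ℕ) := Nat.find_le h
    _ < n := (i - j).isLt

lemma dpt_succ (z : Fin n → ℝ) (hz : z ≠ 0) {i : Fin n} (h : z i = 0) :
    dpt z hz i = dpt z hz (i - 1) + 1 := by
  rw [dpt, Nat.find_eq_iff]
  constructor
  · have := dpt_spec z hz (i - 1)
    have e : i - (((dpt z hz (i-1) + 1 : ℕ)) : Fin n) = (i - 1) - ((dpt z hz (i-1) : ℕ) : Fin n) := by
      push_cast
      ring
    rw [e]
    exact this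
  · intro k hk
    match k with
    | 0 => simpa using h
    | (m+1) =>
      have hm : m < dpt z hz (i-1) := by omega
      have := dpt_min z hz (i-1) hm
      have e : i - (((m + 1 : ℕ)) : Fin n) = (i - 1) - ((m : ℕ) : Fin n) := by
        push_cast; ring
      simp only [not_not, e]
      exact this

end Stmt2Aux
namespace Stmt2Aux
open Finset

variable {n : ℕ} [NeZero n]

/-- the sign just after a zero (forward in time) -/
noncomputable def sigp (z : Fin n → ℝ) (hz : z ≠ 0) (i : Fin n) : ℝ :=
  (∏ k ∈ Finset.range (dpt z hz i), cyclicDelta n (i - (k : Fin n))) *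
    sgn (z (i - ((dpt z hz i : ℕ) : Fin n)))

/-- the sign just before a zero (backward in time) -/
noncomputable def sigm (z : Fin n → ℝ) (hz : z ≠ 0) (i : Fin n) : ℝ :=
  (-1) ^ (dpt z hz i) * sigp z hz i

lemma prod_unit {ι : Type*} [DecidableEq ι] {s : Finset ι} {f : ι → ℝ}
    (h : ∀ a ∈ s, f a = 1 ∨ f a = -1) :
    (∏ a ∈ s, f a) = 1 ∨ (∏ a ∈ s, f a) = -1 := by
  classical
  induction s using Finset.induction_on with
  | empty => simp
  | @insert a s' ha ih =>
    rw [Finset.prod_insert ha]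
    rcases h a (Finset.mem_insert_self a s') with h1 | h1 <;>
      rcases ih (fun b hb => h b (Finset.mem_insert_of_mem hb)) with h2 | h2 <;>
        rw [h1, h2] <;> norm_num

lemma sigp_unit (z : Fin n → ℝ) (hz : z ≠ 0) (i : Fin n) :
    sigp z hz i = 1 ∨ sigp z hz i = -1 := by
  unfold sigp
  rcases prod_unit (s := Finset.range (dpt z hz i))
      (f := fun k => cyclicDelta n (i - (k : Fin n))) (fun a _ => delta_unit _) with h | h <;>
    rcases sgn_unit (z (i - ((dpt z hz i : ℕ) : Fin n))) with h' | h' <;>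
      rw [h, h'] <;> norm_num

lemma sigm_unit (z : Fin n → ℝ) (hz : z ≠ 0) (i : Fin n) :
    sigm z hz i = 1 ∨ sigm z hz i = -1 := by
  unfold sigm
  rcases Nat.even_or_odd (dpt z hz i) with h | h
  · rw [h.neg_one_pow]
    simpa using sigp_unit z hz i
  · rw [h.neg_one_pow]
    rcases sigp_unit z hz i with h' | h' <;> rw [h'] <;> norm_num

lemma sigp_of_ne (z : Fin n → ℝ) (hz : z ≠ 0) {i : Fin n} (h : z i ≠ 0) :
    sigp z hz i = sgn (z i) := by
  unfold sigp
  rw [dpt_eq_zero z hz h]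
  simp

lemma sigm_of_ne (z : Fin n → ℝ) (hz : z ≠ 0) {i : Fin n} (h : z i ≠ 0) :
    sigm z hz i = sgn (z i) := by
  unfold sigm
  rw [dpt_eq_zero z hz h, sigp_of_ne z hz h]
  simp

lemma sigp_of_eq (z : Fin n → ℝ) (hz : z ≠ 0) {i : Fin n} (h : z i = 0) :
    sigp z hz i = cyclicDelta n i * sigp z hz (i - 1) := by
  unfold sigp
  rw [dpt_succ z hz h, Finset.prod_range_succ']
  have e1 : ∀ k : ℕ, i - ((k + 1 : ℕ) : Fin n) = (i - 1) - (k : Fin n) := by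
    intro k; push_cast; ring
  have e2 : i - (((dpt z hz (i - 1) + 1 : ℕ)) : Fin n)
      = (i - 1) - ((dpt z hz (i - 1) : ℕ) : Fin n) := by push_cast; ring
  simp only [e1, e2, Nat.cast_zero, sub_zero]
  ring

lemma sigm_of_eq (z : Fin n → ℝ) (hz : z ≠ 0) {i : Fin n} (h : z i = 0) :
    sigm z hz i = -(cyclicDelta n i * sigm z hz (i - 1)) := by
  unfold sigm
  rw [dpt_succ z hz h, sigp_of_eq z hz h, pow_succ]
  ring

end Stmt2Aux
namespace Stmt2Aux
open Finset

attribute [local instance] Classical.propDecidable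

variable {n : ℕ} [NeZero n]

/-- the count of sign changes -/
noncomputable def cnt (n : ℕ) [NeZero n] (τ : Fin n → ℝ) : ℕ :=
  (Finset.univ.filter fun i : Fin n => cyclicDelta n i * τ i * τ (i - 1) < 0).card

lemma cyclicN_eq_cnt (y : Fin n → ℝ) : cyclicN n y = cnt n y := by
  rw [cyclicN, Nat.card_eq_fintype_card, Fintype.card_subtype, cnt]

lemma cnt_eq_of_signs (u v : Fin n → ℝ) (h : ∀ i, 0 < u i * v i) : cnt n u = cnt n v := by
  unfold cnt
  congr 1
  apply Finset.filter_congr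
  intro i _
  have hd : cyclicDelta n i * cyclicDelta n i = 1 := unit_sq (delta_unit i)
  have hab : 0 < (cyclicDelta n i * u i * u (i - 1)) * (cyclicDelta n i * v i * v (i - 1)) := by
    have : (cyclicDelta n i * u i * u (i - 1)) * (cyclicDelta n i * v i * v (i - 1)) =
        (cyclicDelta n i * cyclicDelta n i) * ((u i * v i) * (u (i - 1) * v (i - 1))) := by ring
    rw [this, hd, one_mul]
    exact mul_pos (h i) (h (i - 1))
  constructor
  · intro h1; nlinarith
  · intro h1; nlinarith

lemma unit_mul {a b : ℝ} (ha : a = 1 ∨ a = -1) (hb : b = 1 ∨ b = -1) :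
    a * b = 1 ∨ a * b = -1 := by
  rcases ha with h | h <;> rcases hb with h' | h' <;> rw [h, h'] <;> norm_num

lemma card_neg_parity {ι : Type*} [DecidableEq ι] {s : Finset ι} {f : ι → ℝ}
    (h : ∀ a ∈ s, f a = 1 ∨ f a = -1) :
    (∏ a ∈ s, f a) = (-1 : ℝ) ^ (s.filter fun a => f a < 0).card := by
  classical
  induction s using Finset.induction_on with
  | empty => simp
  | @insert a s' ha ih =>
    rw [Finset.prod_insert ha, Finset.filter_insert,
      ih (fun b hb => h b (Finset.mem_insert_of_mem hb))]
    rcases h a (Finset.mem_insert_self a s') with h1 | h1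
    · rw [if_neg (by rw [h1]; norm_num), h1, one_mul]
    · rw [if_pos (by rw [h1]; norm_num), h1,
        Finset.card_insert_of_notMem (fun hc => ha (Finset.mem_of_mem_filter a hc)), pow_succ]
      ring

lemma even_iff_of_pow {a b : ℕ} (h : ((-1 : ℝ)) ^ a = (-1) ^ b) : (Even a ↔ Even b) := by
  rcases Nat.even_or_odd a with ha | ha <;> rcases Nat.even_or_odd b with hb | hb
  · simp [ha, hb]
  · rw [ha.neg_one_pow, hb.neg_one_pow] at h; norm_num at h
  · rw [ha.neg_one_pow, hb.neg_one_pow] at h; norm_num at h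
  · simp [Nat.not_even_iff_odd.2 ha, Nat.not_even_iff_odd.2 hb]

lemma telescope (τ : Fin n → ℝ) (hτ : ∀ i, τ i = 1 ∨ τ i = -1) (j : Fin n) (M : ℕ) :
    (∏ r ∈ Finset.range M, (τ (j + 1 + (r : Fin n)) * τ (j + (r : Fin n)))) =
      τ (j + (M : Fin n)) * τ j := by
  induction M with
  | zero => simp [unit_sq (hτ j)]
  | succ M ih =>
    rw [Finset.prod_range_succ, ih]
    have e : j + ((M + 1 : ℕ) : Fin n) = j + 1 + ((M : ℕ) : Fin n) := by push_cast; ring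
    rw [e]
    have h2 := unit_sq (hτ (j + ((M : ℕ) : Fin n)))
    linear_combination (τ (j + 1 + ((M : ℕ) : Fin n)) * τ j) * h2

lemma exists_nonzero_run (z : Fin n → ℝ) (hz : z ≠ 0) (j : Fin n) :
    ∃ r : ℕ, z (j + 1 + (r : Fin n)) ≠ 0 := by
  obtain ⟨j', hj'⟩ := Function.ne_iff.1 hz
  refine ⟨((j' - (j + 1) : Fin n) : ℕ), ?_⟩
  rw [Fin.cast_val_eq_self]
  have e : j + 1 + (j' - (j + 1)) = j' := by ring
  rw [e]
  simpa using hj'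

/-- length of the run of zeros following index `j` -/
noncomputable def runlen (z : Fin n → ℝ) (hz : z ≠ 0) (j : Fin n) : ℕ :=
  Nat.find (exists_nonzero_run z hz j)

lemma runlen_spec (z : Fin n → ℝ) (hz : z ≠ 0) (j : Fin n) :
    z (j + 1 + ((runlen z hz j : ℕ) : Fin n)) ≠ 0 :=
  Nat.find_spec (exists_nonzero_run z hz j)

lemma runlen_min (z : Fin n → ℝ) (hz : z ≠ 0) (j : Fin n) {r : ℕ} (hr : r < runlen z hz j) :
    z (j + 1 + (r : Fin n)) = 0 := by
  have := Nat.find_min (exists_nonzero_run z hz j) hr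
  simpa using this

lemma runlen_lt (z : Fin n → ℝ) (hz : z ≠ 0) (j : Fin n) : runlen z hz j < n := by
  obtain ⟨j', hj'⟩ := Function.ne_iff.1 hz
  have h : z (j + 1 + (((j' - (j + 1) : Fin n) : ℕ) : Fin n)) ≠ 0 := by
    rw [Fin.cast_val_eq_self]
    have e : j + 1 + (j' - (j + 1)) = j' := by ring
    rw [e]; simpa using hj'
  calc runlen z hz j ≤ ((j' - (j + 1) : Fin n) : ℕ) := Nat.find_le h
    _ < n := (j' - (j + 1)).isLt

end Stmt2Aux
namespace Stmt2Aux
open Finset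

attribute [local instance] Classical.propDecidable

variable {n : ℕ} [NeZero n]

noncomputable def anchor (z : Fin n → ℝ) (hz : z ≠ 0) (i : Fin n) : Fin n :=
  (i - 1) - ((dpt z hz (i - 1) : ℕ) : Fin n)

lemma anchor_ne (z : Fin n → ℝ) (hz : z ≠ 0) (i : Fin n) : z (anchor z hz i) ≠ 0 :=
  dpt_spec z hz (i - 1)

lemma anchor_eq_iff (z : Fin n → ℝ) (hz : z ≠ 0) {j : Fin n} (hj : z j ≠ 0) (i : Fin n) :
    anchor z hz i = j ↔ ∃ r : ℕ, r ≤ runlen z hz j ∧ i = j + 1 + (r : Fin n) := by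
  constructor
  · intro h
    refine ⟨dpt z hz (i - 1), ?_, ?_⟩
    · rw [runlen]
      rw [Nat.le_find_iff]
      intro r hr
      rw [not_not]
      have e : j + 1 + (r : Fin n) = (i - 1) - ((dpt z hz (i - 1) - 1 - r : ℕ) : Fin n) := by
        have c2 : ((dpt z hz (i - 1) - 1 : ℕ) : Fin n) = ((dpt z hz (i - 1) : ℕ) : Fin n) - 1 :=
          Nat.cast_sub (by omega)
        have c3 : ((dpt z hz (i - 1) - 1 - r : ℕ) : Fin n) =
            ((dpt z hz (i - 1) - 1 : ℕ) : Fin n) - (r : Fin n) := Nat.cast_sub (by omega)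
        rw [c3, c2]
        rw [anchor] at h
        rw [← h]; ring
      rw [e]
      exact dpt_min z hz (i - 1) (by omega)
    · rw [anchor] at h
      rw [← h]; ring
  · rintro ⟨r, hr, rfl⟩
    have hd : dpt z hz (j + 1 + (r : Fin n) - 1) = r := by
      have e1 : j + 1 + (r : Fin n) - 1 = j + (r : Fin n) := by ring
      rw [e1, dpt, Nat.find_eq_iff]
      constructor
      · have e : j + (r : Fin n) - ((r : ℕ) : Fin n) = j := by push_cast; ring
        rw [e]; exact hj
      · intro k hk
        rw [not_not]
        have c1 : ((r - k : ℕ) : Fin n) = (r : Fin n) - (k : Fin n) := Nat.cast_sub (by omega)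
        have c2 : ((r - k - 1 : ℕ) : Fin n) = ((r - k : ℕ) : Fin n) - 1 := Nat.cast_sub (by omega)
        have e : j + (r : Fin n) - (k : Fin n) = j + 1 + ((r - k - 1 : ℕ) : Fin n) := by
          rw [c2, c1]; ring
        rw [e]
        exact runlen_min z hz j (by omega)
    rw [anchor, hd]
    ring

lemma fiber_card_eq (z : Fin n → ℝ) (hz : z ≠ 0) (τ : Fin n → ℝ) {j : Fin n} (hj : z j ≠ 0) :
    (((Finset.univ : Finset (Fin n)).filter
        fun i => cyclicDelta n i * τ i * τ (i - 1) < 0).filter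
      fun i => anchor z hz i = j).card
    = ((Finset.range (runlen z hz j + 1)).filter fun r : ℕ =>
        cyclicDelta n (j + 1 + (r : Fin n)) * τ (j + 1 + (r : Fin n)) * τ (j + (r : Fin n)) < 0).card := by
  symm
  apply Finset.card_bij (fun (r : ℕ) _ => j + 1 + (r : Fin n))
  · intro r hr
    rw [Finset.mem_filter] at hr
    obtain ⟨hr1, hr2⟩ := hr
    rw [Finset.mem_range] at hr1
    rw [Finset.mem_filter, Finset.mem_filter]
    refine ⟨⟨Finset.mem_univ _, ?_⟩, ?_⟩
    · have e : j + 1 + (r : Fin n) - 1 = j + (r : Fin n) := by ring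
      rw [e]; exact hr2
    · exact (anchor_eq_iff z hz hj _).2 ⟨r, by omega, rfl⟩
  · intro r₁ h₁ r₂ h₂ he
    rw [Finset.mem_filter, Finset.mem_range] at h₁ h₂
    have hc : (r₁ : Fin n) = (r₂ : Fin n) := by
      have := he
      exact add_left_cancel this
    have v1 : ((r₁ : Fin n) : ℕ) = r₁ :=
      Fin.val_cast_of_lt (lt_of_lt_of_le h₁.1 (runlen_lt z hz j))
    have v2 : ((r₂ : Fin n) : ℕ) = r₂ :=
      Fin.val_cast_of_lt (lt_of_lt_of_le h₂.1 (runlen_lt z hz j))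
    rw [← v1, ← v2, hc]
  · intro i hi
    rw [Finset.mem_filter, Finset.mem_filter] at hi
    obtain ⟨⟨_, hneg⟩, hanch⟩ := hi
    obtain ⟨r, hr, he⟩ := (anchor_eq_iff z hz hj i).1 hanch
    refine ⟨r, ?_, he.symm⟩
    rw [Finset.mem_filter, Finset.mem_range]
    refine ⟨by omega, ?_⟩
    rw [← he]
    have e : j + (r : Fin n) = i - 1 := by rw [he]; ring
    rw [e]
    exact hneg

lemma fiber_card_zero (z : Fin n → ℝ) (hz : z ≠ 0) (τ : Fin n → ℝ) {j : Fin n} (hj : z j = 0) :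
    (((Finset.univ : Finset (Fin n)).filter
        fun i => cyclicDelta n i * τ i * τ (i - 1) < 0).filter
      fun i => anchor z hz i = j).card = 0 := by
  rw [Finset.card_eq_zero, Finset.filter_eq_empty_iff]
  intro i _
  intro h
  exact anchor_ne z hz i (h ▸ hj)

end Stmt2Aux
namespace Stmt2Aux
open Finset

attribute [local instance] Classical.propDecidable

variable {n : ℕ} [NeZero n]

noncomputable def Acard (z : Fin n → ℝ) (hz : z ≠ 0) (τ : Fin n → ℝ) (j : Fin n) : ℕ :=
  ((Finset.range (runlen z hz j + 1)).filter fun r : ℕ =>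
    cyclicDelta n (j + 1 + (r : Fin n)) * τ (j + 1 + (r : Fin n)) * τ (j + (r : Fin n)) < 0).card

lemma Acard_pow (z : Fin n → ℝ) (hz : z ≠ 0) {τ : Fin n → ℝ}
    (hτu : ∀ i, τ i = 1 ∨ τ i = -1) (hτ : ∀ i, z i ≠ 0 → τ i = sgn (z i))
    {j : Fin n} (hj : z j ≠ 0) :
    (-1 : ℝ) ^ (Acard z hz τ j) =
      (∏ r ∈ Finset.range (runlen z hz j + 1), cyclicDelta n (j + 1 + (r : Fin n))) *
        (sgn (z (j + 1 + ((runlen z hz j : ℕ) : Fin n))) * sgn (z j)) := by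
  have hunit : ∀ r ∈ Finset.range (runlen z hz j + 1),
      cyclicDelta n (j + 1 + (r : Fin n)) * τ (j + 1 + (r : Fin n)) * τ (j + (r : Fin n)) = 1 ∨
      cyclicDelta n (j + 1 + (r : Fin n)) * τ (j + 1 + (r : Fin n)) * τ (j + (r : Fin n)) = -1 :=
    fun r _ => unit_mul (unit_mul (delta_unit _) (hτu _)) (hτu _)
  rw [Acard, ← card_neg_parity hunit]
  have e1 : ∀ r ∈ Finset.range (runlen z hz j + 1),
      cyclicDelta n (j + 1 + (r : Fin n)) * τ (j + 1 + (r : Fin n)) * τ (j + (r : Fin n)) =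
      cyclicDelta n (j + 1 + (r : Fin n)) * (τ (j + 1 + (r : Fin n)) * τ (j + (r : Fin n))) :=
    fun r _ => by ring
  rw [Finset.prod_congr rfl e1, Finset.prod_mul_distrib,
    telescope τ hτu j (runlen z hz j + 1)]
  have e2 : j + ((runlen z hz j + 1 : ℕ) : Fin n) = j + 1 + ((runlen z hz j : ℕ) : Fin n) := by
    push_cast; ring
  rw [e2, hτ _ (runlen_spec z hz j), hτ _ hj]

lemma Acard_bounds (z : Fin n → ℝ) (hz : z ≠ 0) {τ : Fin n → ℝ}
    (hτu : ∀ i, τ i = 1 ∨ τ i = -1) (hτ : ∀ i, z i ≠ 0 → τ i = sgn (z i))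
    {j : Fin n} (hj : z j ≠ 0) :
    Acard z hz (sigp z hz) j ≤ Acard z hz τ j ∧
      Acard z hz τ j ≤ Acard z hz (sigm z hz) j := by
  set m := runlen z hz j with hm
  -- parity relations
  have hpτ := Acard_pow z hz hτu hτ hj
  have hpp := Acard_pow z hz (sigp_unit z hz) (fun i h => sigp_of_ne z hz h) hj
  have hpm := Acard_pow z hz (sigm_unit z hz) (fun i h => sigm_of_ne z hz h) hj
  have hev1 : Even (Acard z hz (sigp z hz) j) ↔ Even (Acard z hz τ j) :=
    even_iff_of_pow (by rw [hpp, hpτ])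
  have hev2 : Even (Acard z hz τ j) ↔ Even (Acard z hz (sigm z hz) j) :=
    even_iff_of_pow (by rw [hpτ, hpm])
  -- Acard sigp ≤ 1
  have hple : Acard z hz (sigp z hz) j ≤ 1 := by
    have hsub : ((Finset.range (m + 1)).filter fun r : ℕ =>
        cyclicDelta n (j + 1 + (r : Fin n)) * sigp z hz (j + 1 + (r : Fin n)) *
          sigp z hz (j + (r : Fin n)) < 0) ⊆ {m} := by
      intro r hr
      rw [Finset.mem_filter, Finset.mem_range] at hr
      obtain ⟨hr1, hr2⟩ := hr
      rw [Finset.mem_singleton]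
      by_contra hne
      have hrm : r < m := by omega
      have hz0 : z (j + 1 + (r : Fin n)) = 0 := runlen_min z hz j hrm
      have hrec := sigp_of_eq z hz hz0
      have e : j + 1 + (r : Fin n) - 1 = j + (r : Fin n) := by ring
      rw [e] at hrec
      rw [hrec] at hr2
      have hd2 := unit_sq (delta_unit (j + 1 + (r : Fin n)))
      have hs2 := unit_sq (sigp_unit z hz (j + (r : Fin n)))
      nlinarith
    calc Acard z hz (sigp z hz) j ≤ ({m} : Finset ℕ).card := Finset.card_le_card hsub
      _ = 1 := Finset.card_singleton m
  -- Acard sigm ≥ m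
  have hmge : m ≤ Acard z hz (sigm z hz) j := by
    have hsub : Finset.range m ⊆ ((Finset.range (m + 1)).filter fun r : ℕ =>
        cyclicDelta n (j + 1 + (r : Fin n)) * sigm z hz (j + 1 + (r : Fin n)) *
          sigm z hz (j + (r : Fin n)) < 0) := by
      intro r hr
      rw [Finset.mem_range] at hr
      rw [Finset.mem_filter, Finset.mem_range]
      refine ⟨by omega, ?_⟩
      have hz0 : z (j + 1 + (r : Fin n)) = 0 := runlen_min z hz j hr
      have hrec := sigm_of_eq z hz hz0
      have e : j + 1 + (r : Fin n) - 1 = j + (r : Fin n) := by ring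
      rw [e] at hrec
      rw [hrec]
      have hd2 := unit_sq (delta_unit (j + 1 + (r : Fin n)))
      have hs2 := unit_sq (sigm_unit z hz (j + (r : Fin n)))
      nlinarith
    calc m = (Finset.range m).card := (Finset.card_range m).symm
      _ ≤ _ := Finset.card_le_card hsub
  -- Acard τ ≤ m + 1
  have hτle : Acard z hz τ j ≤ m + 1 := by
    calc Acard z hz τ j ≤ (Finset.range (m + 1)).card := Finset.card_le_card (Finset.filter_subset _ _)
      _ = m + 1 := Finset.card_range (m + 1)
  have hmle : Acard z hz (sigm z hz) j ≤ m + 1 := by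
    calc Acard z hz (sigm z hz) j ≤ (Finset.range (m + 1)).card :=
        Finset.card_le_card (Finset.filter_subset _ _)
      _ = m + 1 := Finset.card_range (m + 1)
  rw [Nat.even_iff, Nat.even_iff] at hev1 hev2
  omega

lemma cnt_bounds (z : Fin n → ℝ) (hz : z ≠ 0) {τ : Fin n → ℝ}
    (hτu : ∀ i, τ i = 1 ∨ τ i = -1) (hτ : ∀ i, z i ≠ 0 → τ i = sgn (z i)) :
    cnt n (sigp z hz) ≤ cnt n τ ∧ cnt n τ ≤ cnt n (sigm z hz) := by
  have key : ∀ υ : Fin n → ℝ, cnt n υ =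
      ∑ j : Fin n, (if z j = 0 then 0 else Acard z hz υ j) := by
    intro υ
    rw [cnt, Finset.card_eq_sum_card_fiberwise
      (f := fun i => anchor z hz i) (t := Finset.univ) (fun i _ => Finset.mem_univ _)]
    apply Finset.sum_congr rfl
    intro j _
    by_cases hj : z j = 0
    · rw [if_pos hj]
      exact fiber_card_zero z hz υ hj
    · rw [if_neg hj]
      exact fiber_card_eq z hz υ hj
  constructor
  · rw [key (sigp z hz), key τ]
    apply Finset.sum_le_sum
    intro j _
    by_cases hj : z j = 0
    · simp [hj]
    · rw [if_neg hj, if_neg hj]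
      exact (Acard_bounds z hz hτu hτ hj).1
  · rw [key (sigm z hz), key τ]
    apply Finset.sum_le_sum
    intro j _
    by_cases hj : z j = 0
    · simp [hj]
    · rw [if_neg hj, if_neg hj]
      exact (Acard_bounds z hz hτu hτ hj).2

end Stmt2Aux
namespace Stmt2Aux
open Finset Filter Topology

attribute [local instance] Classical.propDecidable

variable {n : ℕ} [NeZero n]

lemma sgn_eq_of_mul_pos {a b : ℝ} (h : 0 < a * b) : sgn a = sgn b := by
  unfold sgn
  rcases lt_trichotomy a 0 with ha | ha | ha
  · rw [if_neg (not_lt.2 ha.le), if_neg (by nlinarith)]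
  · exfalso; rw [ha] at h; simp at h
  · rw [if_pos ha, if_pos (by nlinarith)]

lemma frequently_cnt (z : Fin n → ℝ) {τ : Fin n → ℝ}
    (hτu : ∀ i, τ i = 1 ∨ τ i = -1) (hτ : ∀ i, z i ≠ 0 → τ i = sgn (z i)) :
    ∃ᶠ y in 𝓝[cyclicLambda n] z, cyclicN n y = cnt n τ := by
  set y : ℝ → Fin n → ℝ := fun ε i => if z i = 0 then ε * τ i else z i with hy
  have htend : Tendsto y (𝓝[>] (0 : ℝ)) (𝓝[cyclicLambda n] z) := by
    rw [tendsto_nhdsWithin_iff]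
    constructor
    · apply tendsto_pi_nhds.2
      intro i
      by_cases hzi : z i = 0
      · simp only [hy, hzi, if_pos]
        have : Tendsto (fun ε : ℝ => ε * τ i) (𝓝 (0 : ℝ)) (𝓝 ((0 : ℝ) * τ i)) :=
          (continuous_id.mul continuous_const).tendsto 0
        rw [zero_mul] at this
        exact this.mono_left nhdsWithin_le_nhds
      · simp only [hy, hzi, if_neg, if_false]
        exact tendsto_const_nhds
    · filter_upwards [self_mem_nhdsWithin] with ε hε
      intro i
      by_cases hzi : z i = 0
      · simp only [hy, hzi, if_pos]
        exact mul_ne_zero (ne_of_gt hε) (unit_ne_zero (hτu i))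
      · simp only [hy, if_neg hzi]
        exact hzi
  have hval : ∀ᶠ ε in 𝓝[>] (0 : ℝ), cyclicN n (y ε) = cnt n τ := by
    filter_upwards [self_mem_nhdsWithin] with ε hε
    rw [cyclicN_eq_cnt]
    apply cnt_eq_of_signs
    intro i
    by_cases hzi : z i = 0
    · simp only [hy, hzi, if_pos]
      have : ε * τ i * τ i = ε * (τ i * τ i) := by ring
      rw [this, unit_sq (hτu i), mul_one]
      exact hε
    · simp only [hy, hzi, if_neg, if_false]
      rw [hτ i hzi, mul_comm]
      exact sgn_mul_pos hzi
  exact htend.frequently hval.frequently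

lemma eventually_bounds (z : Fin n → ℝ) (hz : z ≠ 0) :
    ∀ᶠ y in 𝓝[cyclicLambda n] z,
      cnt n (sigp z hz) ≤ cyclicN n y ∧ cyclicN n y ≤ cnt n (sigm z hz) := by
  set U : Set (Fin n → ℝ) := {w | ∀ i, z i ≠ 0 → 0 < w i * z i} with hU
  have hUopen : IsOpen U := by
    have : U = ⋂ i : Fin n, {w : Fin n → ℝ | z i ≠ 0 → 0 < w i * z i} := by
      ext w; simp [hU, Set.mem_iInter]
    rw [this]
    apply isOpen_iInter_of_finite
    intro i
    by_cases hzi : z i = 0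
    · convert isOpen_univ
      ext w; simp [hzi]
    · have : {w : Fin n → ℝ | z i ≠ 0 → 0 < w i * z i} =
          (fun w : Fin n → ℝ => w i * z i) ⁻¹' Set.Ioi 0 := by
        ext w; simp [hzi]
      rw [this]
      exact (IsOpen.preimage ((continuous_apply i).mul continuous_const) isOpen_Ioi)
  have hUz : z ∈ U := fun i hi => mul_self_pos.2 hi
  filter_upwards [eventually_nhdsWithin_of_eventually_nhds (hUopen.eventually_mem hUz),
    self_mem_nhdsWithin] with w hw hwΛ
  have hwne : ∀ i, w i ≠ 0 := hwΛ
  have hcnt : cyclicN n w = cnt n (fun i => sgn (w i)) := by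
    rw [cyclicN_eq_cnt]
    apply cnt_eq_of_signs
    intro i
    rw [mul_comm]
    exact sgn_mul_pos (hwne i)
  have hτu : ∀ i, sgn (w i) = 1 ∨ sgn (w i) = -1 := fun i => sgn_unit _
  have hτ : ∀ i, z i ≠ 0 → sgn (w i) = sgn (z i) := fun i hi => sgn_eq_of_mul_pos (hw i hi)
  have := cnt_bounds z hz hτu hτ
  rw [hcnt]
  exact this

lemma nm_eq (z : Fin n → ℝ) (hz : z ≠ 0) : cyclicNm n z = cnt n (sigp z hz) := by
  have hmem : cnt n (sigp z hz) ∈ {k | ∃ᶠ y in 𝓝[cyclicLambda n] z, cyclicN n y = k} :=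
    frequently_cnt z (sigp_unit z hz) (fun i h => sigp_of_ne z hz h)
  have hlow : ∀ k ∈ {k | ∃ᶠ y in 𝓝[cyclicLambda n] z, cyclicN n y = k},
      cnt n (sigp z hz) ≤ k := by
    intro k hk
    obtain ⟨y, hky, h1, _⟩ := (hk.and_eventually (eventually_bounds z hz)).exists
    rw [← hky]; exact h1
  exact le_antisymm (Nat.sInf_le hmem) (le_csInf ⟨_, hmem⟩ hlow)

lemma nM_eq (z : Fin n → ℝ) (hz : z ≠ 0) : cyclicNM n z = cnt n (sigm z hz) := by
  have hmem : cnt n (sigm z hz) ∈ {k | ∃ᶠ y in 𝓝[cyclicLambda n] z, cyclicN n y = k} :=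
    frequently_cnt z (sigm_unit z hz) (fun i h => sigm_of_ne z hz h)
  have hup : ∀ k ∈ {k | ∃ᶠ y in 𝓝[cyclicLambda n] z, cyclicN n y = k},
      k ≤ cnt n (sigm z hz) := by
    intro k hk
    obtain ⟨y, hky, _, h2⟩ := (hk.and_eventually (eventually_bounds z hz)).exists
    rw [← hky]; exact h2
  exact le_antisymm (csSup_le ⟨_, hmem⟩ hup) (le_csSup ⟨_, hup⟩ hmem)

lemma nm_le_nM (z : Fin n → ℝ) (hz : z ≠ 0) :
    cnt n (sigp z hz) ≤ cnt n (sigm z hz) :=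
  (cnt_bounds z hz (sigm_unit z hz) (fun i h => sigm_of_ne z hz h)).1

lemma lambda_ne_zero {z : Fin n → ℝ} (hlam : ∀ i, z i ≠ 0) : z ≠ 0 := by
  intro h
  exact hlam ⟨0, Nat.pos_of_ne_zero (NeZero.ne n)⟩ (by rw [h]; rfl)

lemma sig_lambda {z : Fin n → ℝ} (hlam : ∀ i, z i ≠ 0) :
    cnt n (sigp z (lambda_ne_zero hlam)) = cnt n z ∧
      cnt n (sigm z (lambda_ne_zero hlam)) = cnt n z := by
  constructor
  · have : ∀ i, sigp z (lambda_ne_zero hlam) i = sgn (z i) := fun i => sigp_of_ne _ _ (hlam i)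
    calc cnt n (sigp z (lambda_ne_zero hlam)) = cnt n (fun i => sgn (z i)) := by
          congr 1; funext i; exact this i
      _ = cnt n z := cnt_eq_of_signs _ _ (fun i => by have := sgn_mul_pos (hlam i); nlinarith)
  · have : ∀ i, sigm z (lambda_ne_zero hlam) i = sgn (z i) := fun i => sigm_of_ne _ _ (hlam i)
    calc cnt n (sigm z (lambda_ne_zero hlam)) = cnt n (fun i => sgn (z i)) := by
          congr 1; funext i; exact this i
      _ = cnt n z := cnt_eq_of_signs _ _ (fun i => by have := sgn_mul_pos (hlam i); nlinarith)

lemma good_of_lambda {z : Fin n → ℝ} (hlam : ∀ i, z i ≠ 0) :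
    cyclicNm n z = cnt n z ∧ cyclicNM n z = cnt n z := by
  obtain ⟨h1, h2⟩ := sig_lambda hlam
  exact ⟨by rw [nm_eq z (lambda_ne_zero hlam), h1], by rw [nM_eq z (lambda_ne_zero hlam), h2]⟩

end Stmt2Aux
namespace Stmt2Aux
open Filter Topology Set

variable {n : ℕ} [NeZero n] {S : LinCNF n} {x : ℝ → Fin n → ℝ}

lemma sol_cont (hsol : S.IsSolution x) (i : Fin n) : Continuous fun t => x t i :=
  continuous_iff_continuousAt.2 fun t => (hsol t i).continuousAt

lemma delta_sub_pos (S : LinCNF n) (t : ℝ) (i : Fin n) : 0 < cyclicDelta n i * S.sub t i := by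
  unfold cyclicDelta
  by_cases h : i = 0
  · rw [if_pos h, h]; have := S.sub_neg t; nlinarith
  · rw [if_neg h]; have := S.sub_pos t i h; nlinarith

lemma never_zero (hsol : S.IsSolution x) (hnontriv : ¬ ∀ t, x t = 0) (t : ℝ) : x t ≠ 0 := by
  intro hzero
  apply hnontriv
  intro t₂
  by_cases htt : t₂ = t
  · rw [htt]; exact hzero
  set a := min t t₂ - 1 with ha
  set b := max t t₂ + 1 with hb
  have hab : a < b := by
    have h1 : min t t₂ ≤ max t t₂ := le_trans (min_le_left _ _) (le_max_left _ _)
    simp only [ha, hb]; linarith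
  set proj : ℝ → ℝ := fun s => max a (min s b) with hproj
  have hprojmem : ∀ s, proj s ∈ Icc a b := by
    intro s
    constructor
    · exact le_max_left _ _
    · simp only [hproj, max_le_iff]
      exact ⟨hab.le, min_le_right _ _⟩
  have hprojeq : ∀ s ∈ Icc a b, proj s = s := by
    intro s hs
    simp only [hproj]
    rw [min_eq_left hs.2, max_eq_right hs.1]
  set v : ℝ → (Fin n → ℝ) → (Fin n → ℝ) :=
    fun s y i => S.diag (proj s) i * y i + S.sub (proj s) i * y (i - 1) with hv
  -- bound the coefficients
  set h : ℝ → ℝ := fun s => ∑ i : Fin n, (|S.diag s i| + |S.sub s i|) with hh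
  have hcont : Continuous h := by
    apply continuous_finset_sum
    intro i _
    exact ((S.cont_diag i).abs.add (S.cont_sub i).abs)
  obtain ⟨C, hC⟩ := (isCompact_Icc (a := a) (b := b)).bddAbove_image hcont.continuousOn
  rw [mem_upperBounds] at hC
  have hCb : ∀ s ∈ Icc a b, h s ≤ C := fun s hs => hC _ (Set.mem_image_of_mem h hs)
  have hhnn : ∀ s, 0 ≤ h s := by
    intro s
    apply Finset.sum_nonneg
    intro i _
    positivity
  have hC0 : 0 ≤ C := le_trans (hhnn a) (hCb a ⟨le_refl a, hab.le⟩)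
  have hterm : ∀ s (i : Fin n), |S.diag (proj s) i| + |S.sub (proj s) i| ≤ C := by
    intro s i
    calc |S.diag (proj s) i| + |S.sub (proj s) i|
        ≤ h (proj s) := Finset.single_le_sum (f := fun i : Fin n => |S.diag (proj s) i| + |S.sub (proj s) i|)
          (fun i _ => by positivity) (Finset.mem_univ i)
      _ ≤ C := hCb _ (hprojmem s)
  set K : NNReal := ⟨C, hC0⟩ with hK
  have hlip : ∀ s, LipschitzOnWith K (v s) Set.univ := by
    intro s
    rw [lipschitzOnWith_univ]
    apply LipschitzWith.of_dist_le_mul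
    intro y w
    have hd0 : (0 : ℝ) ≤ dist y w := dist_nonneg
    rw [dist_pi_le_iff (by positivity)]
    intro i
    have hu : |y i - w i| ≤ dist y w := by
      rw [← Real.dist_eq]; exact dist_le_pi_dist y w i
    have hu' : |y (i - 1) - w (i - 1)| ≤ dist y w := by
      rw [← Real.dist_eq]; exact dist_le_pi_dist y w (i - 1)
    have h1 : v s y i - v s w i =
        S.diag (proj s) i * (y i - w i) + S.sub (proj s) i * (y (i - 1) - w (i - 1)) := by
      simp only [hv]; ring
    rw [Real.dist_eq, h1]
    calc |S.diag (proj s) i * (y i - w i) + S.sub (proj s) i * (y (i - 1) - w (i - 1))|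
        ≤ |S.diag (proj s) i * (y i - w i)| + |S.sub (proj s) i * (y (i - 1) - w (i - 1))| :=
          abs_add_le _ _
      _ = |S.diag (proj s) i| * |y i - w i| + |S.sub (proj s) i| * |y (i - 1) - w (i - 1)| := by
          rw [abs_mul, abs_mul]
      _ ≤ |S.diag (proj s) i| * dist y w + |S.sub (proj s) i| * dist y w := by
          have := abs_nonneg (S.diag (proj s) i)
          have := abs_nonneg (S.sub (proj s) i)
          nlinarith
      _ = (|S.diag (proj s) i| + |S.sub (proj s) i|) * dist y w := by ring
      _ ≤ C * dist y w := by nlinarith [hterm s i]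
      _ = (K : ℝ) * dist y w := rfl
  have ht : t ∈ Ioo a b := by
    constructor
    · simp only [ha]; have := min_le_left t t₂; linarith
    · simp only [hb]; have := le_max_left t t₂; linarith
  have hxcont : Continuous x := continuous_pi (sol_cont hsol)
  have hres := ODE_solution_unique_of_mem_Icc (fun s _ => hlip s) ht hxcont.continuousOn
    (fun s hs => by
      apply hasDerivAt_pi.2
      intro i
      have := hsol s i
      have he : proj s = s := hprojeq s (Ioo_subset_Icc_self hs)
      simp only [hv, he]
      exact this)
    (fun s _ => Set.mem_univ _)
    (continuousOn_const (c := (0 : Fin n → ℝ)))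
    (fun s hs => by
      have : v s (0 : Fin n → ℝ) = 0 := by
        funext i
        simp [hv]
      rw [this]
      exact hasDerivAt_const s (0 : Fin n → ℝ))
    (fun s _ => Set.mem_univ _)
    (by simpa using hzero)
  have ht₂ : t₂ ∈ Icc a b := by
    constructor
    · simp only [ha]; have := min_le_right t t₂; linarith
    · simp only [hb]; have := le_max_right t t₂; linarith
  exact hres ht₂

end Stmt2Aux
namespace Stmt2Aux
open Filter Topology Set

variable {n : ℕ} [NeZero n] {S : LinCNF n} {x : ℝ → Fin n → ℝ}

lemma local_signs (hsol : S.IsSolution x) (hnontriv : ¬ ∀ t, x t = 0) (t₀ : ℝ) :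
    ∃ ε > 0, ∀ s : ℝ, 0 < s → s ≤ ε →
      (∀ i, 0 < sigp (x t₀) (never_zero hsol hnontriv t₀) i * x (t₀ + s) i) ∧
      (∀ i, 0 < sigm (x t₀) (never_zero hsol hnontriv t₀) i * x (t₀ - s) i) := by
  set z := x t₀ with hzdef
  set hz := never_zero hsol hnontriv t₀ with hhz
  have main : ∀ d : ℕ, ∀ i : Fin n, dpt z hz i = d →
      ∃ ε > (0:ℝ), ∀ s : ℝ, 0 < s → s ≤ ε →
        (0 < sigp z hz i * x (t₀ + s) i) ∧ (0 < sigm z hz i * x (t₀ - s) i) := by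
    intro d
    induction d with
    | zero =>
      intro i hd
      have hne : z i ≠ 0 := by
        have := dpt_spec z hz i
        rw [hd] at this
        simpa using this
      have hfc : Continuous fun u => sgn (z i) * x u i :=
        continuous_const.mul (sol_cont hsol i)
      have hpos : 0 < sgn (z i) * x t₀ i := by
        rw [← hzdef]
        exact sgn_mul_pos hne
      have hmem : (fun u => sgn (z i) * x u i) ⁻¹' Ioi 0 ∈ 𝓝 t₀ :=
        hfc.continuousAt.preimage_mem_nhds (Ioi_mem_nhds hpos)
      obtain ⟨δ, hδ0, hδ⟩ := Metric.mem_nhds_iff.1 hmem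
      refine ⟨δ / 2, by linarith, ?_⟩
      intro s hs0 hsδ
      have h1 : t₀ + s ∈ Metric.ball t₀ δ := by
        rw [Metric.mem_ball, Real.dist_eq]
        rw [abs_of_pos (by linarith : (0:ℝ) < t₀ + s - t₀)]
        linarith
      have h2 : t₀ - s ∈ Metric.ball t₀ δ := by
        rw [Metric.mem_ball, Real.dist_eq]
        rw [abs_of_neg (by linarith : t₀ - s - t₀ < 0)]
        linarith
      constructor
      · rw [sigp_of_ne z hz hne]
        exact hδ h1
      · rw [sigm_of_ne z hz hne]
        exact hδ h2
    | succ d ih =>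
      intro i hd
      have hz0 : z i = 0 := by
        by_contra hne
        rw [dpt_eq_zero z hz hne] at hd
        exact Nat.succ_ne_zero d hd.symm
      have hd1 : dpt z hz (i - 1) = d := by
        have := dpt_succ z hz hz0
        rw [hd] at this
        omega
      obtain ⟨ε₁, hε₁, hQ⟩ := ih (i - 1) hd1
      -- integrating factor
      set A : ℝ → ℝ := fun u => ∫ w in t₀..u, S.diag w i with hA
      have hA' : ∀ u, HasDerivAt A (S.diag u i) u := by
        intro u
        exact intervalIntegral.integral_hasDerivAt_right
          ((S.cont_diag i).intervalIntegrable _ _)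
          ((S.cont_diag i).stronglyMeasurableAtFilter _ _)
          (S.cont_diag i).continuousAt
      have hAc : Continuous A := continuous_iff_continuousAt.2 fun u => (hA' u).continuousAt
      set φ : ℝ → ℝ := fun u => Real.exp (-A u) * x u i with hφ
      set ψ : ℝ → ℝ := fun u => Real.exp (-A u) * (S.sub u i * x u (i - 1)) with hψ
      have hφ' : ∀ u, HasDerivAt φ (ψ u) u := by
        intro u
        have h1 : HasDerivAt (fun w => Real.exp (-A w)) (Real.exp (-A u) * -S.diag u i) u :=
          (hA' u).neg.exp
        have h2 := h1.fun_mul (hsol u i)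
        refine h2.congr_deriv ?_
        show _ = Real.exp (-A u) * (S.sub u i * x u (i - 1))
        ring
      have hψc : Continuous ψ :=
        (hAc.neg.rexp).mul ((S.cont_sub i).mul (sol_cont hsol (i - 1)))
      have hFTC : ∀ u₁ u₂ : ℝ, (∫ w in u₁..u₂, ψ w) = φ u₂ - φ u₁ := fun u₁ u₂ =>
        intervalIntegral.integral_eq_sub_of_hasDerivAt (fun w _ => hφ' w)
          (hψc.intervalIntegrable _ _)
      have hφ0 : φ t₀ = 0 := by
        simp only [hφ, ← hzdef, hz0, mul_zero]
      have hxrec : ∀ u, x u i = Real.exp (A u) * φ u := by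
        intro u
        simp only [hφ]
        rw [← mul_assoc, ← Real.exp_add, add_neg_cancel, Real.exp_zero, one_mul]
      refine ⟨ε₁, hε₁, ?_⟩
      intro s hs0 hsε
      constructor
      · -- forward
        rw [sigp_of_eq z hz hz0]
        have e1 : i - 1 = i - 1 := rfl
        have hint : 0 < ∫ w in t₀..(t₀ + s),
            (cyclicDelta n i * sigp z hz (i - 1)) * ψ w := by
          apply intervalIntegral.intervalIntegral_pos_of_pos_on
            ((continuous_const.mul hψc).intervalIntegrable _ _)
          · intro w hw
            obtain ⟨hw1, hw2⟩ := hw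
            have hs' : 0 < w - t₀ := by linarith
            have hs'' : w - t₀ ≤ ε₁ := by linarith
            have hIH := (hQ (w - t₀) hs' hs'').1
            have hwe : t₀ + (w - t₀) = w := by ring
            rw [hwe] at hIH
            have hds := delta_sub_pos S w i
            have e2 : (cyclicDelta n i * sigp z hz (i - 1)) * ψ w =
                Real.exp (-A w) * ((cyclicDelta n i * S.sub w i) *
                  (sigp z hz (i - 1) * x w (i - 1))) := by
              simp only [hψ]; ring
            show 0 < (cyclicDelta n i * sigp z hz (i - 1)) * ψ w
            rw [e2]
            exact mul_pos (Real.exp_pos _) (mul_pos hds hIH)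
          · linarith
        rw [intervalIntegral.integral_const_mul, hFTC, hφ0, sub_zero] at hint
        rw [hxrec (t₀ + s)]
        have e3 : cyclicDelta n i * sigp z hz (i - 1) * (Real.exp (A (t₀ + s)) * φ (t₀ + s)) =
            Real.exp (A (t₀ + s)) * (cyclicDelta n i * sigp z hz (i - 1) * φ (t₀ + s)) := by ring
        rw [e3]
        exact mul_pos (Real.exp_pos _) hint
      · -- backward
        rw [sigm_of_eq z hz hz0]
        have hint : 0 < ∫ w in (t₀ - s)..t₀,
            (cyclicDelta n i * sigm z hz (i - 1)) * ψ w := by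
          apply intervalIntegral.intervalIntegral_pos_of_pos_on
            ((continuous_const.mul hψc).intervalIntegrable _ _)
          · intro w hw
            obtain ⟨hw1, hw2⟩ := hw
            have hs' : 0 < t₀ - w := by linarith
            have hs'' : t₀ - w ≤ ε₁ := by linarith
            have hIH := (hQ (t₀ - w) hs' hs'').2
            have hwe : t₀ - (t₀ - w) = w := by ring
            rw [hwe] at hIH
            have hds := delta_sub_pos S w i
            have e2 : (cyclicDelta n i * sigm z hz (i - 1)) * ψ w =
                Real.exp (-A w) * ((cyclicDelta n i * S.sub w i) *
                  (sigm z hz (i - 1) * x w (i - 1))) := by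
              simp only [hψ]; ring
            show 0 < (cyclicDelta n i * sigm z hz (i - 1)) * ψ w
            rw [e2]
            exact mul_pos (Real.exp_pos _) (mul_pos hds hIH)
          · linarith
        rw [intervalIntegral.integral_const_mul, hFTC, hφ0, zero_sub] at hint
        rw [hxrec (t₀ - s)]
        have e3 : -(cyclicDelta n i * sigm z hz (i - 1)) * (Real.exp (A (t₀ - s)) * φ (t₀ - s)) =
            Real.exp (A (t₀ - s)) * (cyclicDelta n i * sigm z hz (i - 1) * -φ (t₀ - s)) := by ring
        rw [e3]
        exact mul_pos (Real.exp_pos _) hint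
  haveI : Nonempty (Fin n) := ⟨⟨0, Nat.pos_of_ne_zero (NeZero.ne n)⟩⟩
  choose ε hεpos hP using fun i => main (dpt z hz i) i rfl
  refine ⟨Finset.univ.inf' Finset.univ_nonempty ε, ?_, ?_⟩
  · rw [gt_iff_lt, Finset.lt_inf'_iff]
    intro i _
    exact hεpos i
  · intro s hs0 hsε
    constructor
    · intro i
      exact (hP i s hs0 (le_trans hsε (Finset.inf'_le _ (Finset.mem_univ i)))).1
    · intro i
      exact (hP i s hs0 (le_trans hsε (Finset.inf'_le _ (Finset.mem_univ i)))).2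

end Stmt2Aux
namespace Stmt2Aux
open Filter Topology Set

variable {n : ℕ} [NeZero n] {S : LinCNF n} {x : ℝ → Fin n → ℝ}

lemma cnt_le (τ : Fin n → ℝ) : cnt n τ ≤ n := by
  rw [cnt]
  calc (Finset.univ.filter fun i : Fin n => cyclicDelta n i * τ i * τ (i - 1) < 0).card
      ≤ (Finset.univ : Finset (Fin n)).card := Finset.card_filter_le _ _
    _ = n := by rw [Finset.card_univ, Fintype.card_fin]

lemma right_local (hsol : S.IsSolution x) (hnontriv : ¬ ∀ t, x t = 0) (t : ℝ) :
    ∃ ε > 0, ∀ s : ℝ, 0 < s → s ≤ ε →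
      cyclicNm n (x (t + s)) = cyclicNm n (x t) ∧ x (t + s) ∈ cyclicGood n := by
  obtain ⟨ε, hε0, hεP⟩ := local_signs hsol hnontriv t
  refine ⟨ε, hε0, ?_⟩
  intro s hs0 hsε
  have h2 := (hεP s hs0 hsε).1
  have hΛ : ∀ i, x (t + s) i ≠ 0 := by
    intro i hi
    have := h2 i
    rw [hi, mul_zero] at this
    exact lt_irrefl 0 this
  obtain ⟨hnm, hnM⟩ := good_of_lambda hΛ
  have hcnt : cnt n (x (t + s)) = cnt n (sigp (x t) (never_zero hsol hnontriv t)) :=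
    cnt_eq_of_signs _ _ (fun i => by have := h2 i; nlinarith)
  constructor
  · rw [hnm, hcnt, nm_eq _ (never_zero hsol hnontriv t)]
  · rw [cyclicGood, Set.mem_setOf_eq, hnm, hnM]

lemma left_local (hsol : S.IsSolution x) (hnontriv : ¬ ∀ t, x t = 0) (t : ℝ) :
    ∃ ε > 0, ∀ s : ℝ, 0 < s → s ≤ ε →
      cyclicNm n (x (t - s)) = cyclicNM n (x t) ∧ x (t - s) ∈ cyclicGood n := by
  obtain ⟨ε, hε0, hεP⟩ := local_signs hsol hnontriv t
  refine ⟨ε, hε0, ?_⟩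
  intro s hs0 hsε
  have h2 := (hεP s hs0 hsε).2
  have hΛ : ∀ i, x (t - s) i ≠ 0 := by
    intro i hi
    have := h2 i
    rw [hi, mul_zero] at this
    exact lt_irrefl 0 this
  obtain ⟨hnm, hnM⟩ := good_of_lambda hΛ
  have hcnt : cnt n (x (t - s)) = cnt n (sigm (x t) (never_zero hsol hnontriv t)) :=
    cnt_eq_of_signs _ _ (fun i => by have := h2 i; nlinarith)
  constructor
  · rw [hnm, hcnt, nM_eq _ (never_zero hsol hnontriv t)]
  · rw [cyclicGood, Set.mem_setOf_eq, hnm, hnM]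

lemma nm_le_nM_pt (hsol : S.IsSolution x) (hnontriv : ¬ ∀ t, x t = 0) (t : ℝ) :
    cyclicNm n (x t) ≤ cyclicNM n (x t) := by
  rw [nm_eq _ (never_zero hsol hnontriv t), nM_eq _ (never_zero hsol hnontriv t)]
  exact nm_le_nM _ _

lemma nu_antitone (hsol : S.IsSolution x) (hnontriv : ¬ ∀ t, x t = 0) :
    ∀ a b : ℝ, a ≤ b → cyclicNm n (x b) ≤ cyclicNm n (x a) := by
  intro a b hab
  rcases eq_or_lt_of_le hab with h | hab'
  · rw [h]
  set ν : ℝ → ℕ := fun t => cyclicNm n (x t) with hν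
  set T : Set ℝ := {t | t ∈ Icc a b ∧ ∀ s ∈ Ioc a t, ν s ≤ ν a} with hT
  have haT : a ∈ T := ⟨⟨le_refl a, hab⟩, fun s hs => absurd hs.1 (not_lt.2 hs.2)⟩
  have hbdd : BddAbove T := ⟨b, fun t ht => ht.1.2⟩
  set u := sSup T with hu
  have hau : a ≤ u := le_csSup hbdd haT
  have hub : u ≤ b := csSup_le ⟨a, haT⟩ (fun t ht => ht.1.2)
  have hlt : ∀ s ∈ Ioo a u, ν s ≤ ν a := by
    intro s hs
    obtain ⟨t', ht'T, hst'⟩ := exists_lt_of_lt_csSup ⟨a, haT⟩ hs.2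
    exact ht'T.2 s ⟨hs.1, hst'.le⟩
  have hclaim : ∀ s ∈ Ioc a u, ν s ≤ ν a := by
    intro s hs
    rcases lt_or_eq_of_le hs.2 with h | h
    · exact hlt s ⟨hs.1, h⟩
    · subst h
      obtain ⟨ε, hε0, hεP⟩ := left_local hsol hnontriv u
      set s' := min ε ((u - a) / 2) with hs'
      have hsa : a < u := hs.1
      have hs'0 : 0 < s' := lt_min hε0 (by linarith)
      have h1 := hεP s' hs'0 (min_le_left _ _)
      have h5 : s' ≤ (u - a) / 2 := min_le_right _ _
      have hmem : u - s' ∈ Ioo a u := Set.mem_Ioo.2 ⟨by linarith, by linarith⟩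
      have h3 : cyclicNm n (x (u - s')) ≤ ν a := hlt _ hmem
      rw [h1.1] at h3
      exact le_trans (nm_le_nM_pt hsol hnontriv u) h3
  have hub' : u = b := by
    by_contra hne
    have hub2 : u < b := lt_of_le_of_ne hub hne
    obtain ⟨ε, hε0, hεP⟩ := right_local hsol hnontriv u
    set t' := min b (u + ε) with ht'
    have ht'u : u < t' := lt_min hub2 (by linarith)
    have ht'T : t' ∈ T := by
      have hat' : a ≤ t' := le_min hab (by linarith)
      refine ⟨⟨hat', min_le_left _ _⟩, ?_⟩
      intro s hs
      rcases le_or_gt s u with h | h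
      · exact hclaim s ⟨hs.1, h⟩
      · have hsle : s ≤ u + ε := le_trans hs.2 (min_le_right _ _)
        have h2 := hεP (s - u) (by linarith) (by linarith)
        have he : u + (s - u) = s := by ring
        rw [he] at h2
        have hνu : ν u ≤ ν a := by
          rcases eq_or_lt_of_le hau with h3 | h3
          · rw [← h3]
          · exact hclaim u ⟨h3, le_refl u⟩
        show cyclicNm n (x s) ≤ ν a
        rw [h2.1]
        exact hνu
    have : t' ≤ u := le_csSup hbdd ht'T
    linarith
  exact hclaim b ⟨hab', by rw [hub']⟩

end Stmt2Aux
open Stmt2Aux in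
/-- Eventual constancy of `N` along a nontrivial solution, both
as `t → +∞` and as `t → −∞`. -/
theorem stmt2 (n : ℕ) [NeZero n] (hn : 2 ≤ n) (S : LinCNF n) (x : ℝ → Fin n → ℝ)
    (hsol : S.IsSolution x) (hnontriv : ¬ ∀ t, x t = 0) :
    ∃ t₀ > (0 : ℝ), ∃ Nplus Nminus : ℕ,
      (∀ t : ℝ, t₀ ≤ t → x t ∈ cyclicGood n ∧ cyclicNm n (x t) = Nplus) ∧
      (∀ t : ℝ, t ≤ -t₀ → x t ∈ cyclicGood n ∧ cyclicNm n (x t) = Nminus) := by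
  classical
  have hanti : ∀ a b : ℝ, a ≤ b → cyclicNm n (x b) ≤ cyclicNm n (x a) :=
    nu_antitone hsol hnontriv
  have hbound : ∀ t : ℝ, cyclicNm n (x t) ≤ n := by
    intro t
    rw [nm_eq _ (never_zero hsol hnontriv t)]
    exact cnt_le _
  -- forward stabilization
  set Sp : Set ℕ := {k | ∃ t : ℝ, 0 ≤ t ∧ cyclicNm n (x t) = k} with hSp
  have hSpne : Sp.Nonempty := ⟨cyclicNm n (x 0), 0, le_refl 0, rfl⟩
  obtain ⟨tp, htp0, htpv⟩ := Nat.sInf_mem hSpne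
  have hfor : ∀ t : ℝ, tp ≤ t → cyclicNm n (x t) = sInf Sp := by
    intro t ht
    refine le_antisymm ?_ ?_
    · rw [← htpv]; exact hanti tp t ht
    · exact Nat.sInf_le ⟨t, le_trans htp0 ht, rfl⟩
  -- backward stabilization
  set Sm : Set ℕ := {k | ∃ t : ℝ, t ≤ 0 ∧ cyclicNm n (x t) = k} with hSm
  have hSmne : Sm.Nonempty := ⟨cyclicNm n (x 0), 0, le_refl 0, rfl⟩
  have hSmbdd : BddAbove Sm := by
    refine ⟨n, ?_⟩
    rintro k ⟨t, _, rfl⟩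
    exact hbound t
  obtain ⟨tm, htm0, htmv⟩ := Nat.sSup_mem hSmne hSmbdd
  have hback : ∀ t : ℝ, t ≤ tm → cyclicNm n (x t) = sSup Sm := by
    intro t ht
    refine le_antisymm ?_ ?_
    · exact le_csSup hSmbdd ⟨t, le_trans ht htm0, rfl⟩
    · rw [← htmv]; exact hanti t tm ht
  refine ⟨max 1 (max (tp + 1) (1 - tm)), by positivity, sInf Sp, sSup Sm, ?_, ?_⟩
  · intro t ht
    have htp : tp < t := by
      have h1 : tp + 1 ≤ max 1 (max (tp + 1) (1 - tm)) := le_trans (le_max_left _ _) (le_max_right _ _)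
      linarith
    have hval : cyclicNm n (x t) = sInf Sp := hfor t htp.le
    refine ⟨?_, hval⟩
    obtain ⟨ε, hε0, hεP⟩ := left_local hsol hnontriv t
    set s' := min ε ((t - tp) / 2) with hs'
    have hs'0 : 0 < s' := lt_min hε0 (by linarith)
    have h1 := hεP s' hs'0 (min_le_left _ _)
    have h5 : s' ≤ (t - tp) / 2 := min_le_right _ _
    have h3 : cyclicNm n (x (t - s')) = sInf Sp := hfor (t - s') (by linarith)
    show cyclicNm n (x t) = cyclicNM n (x t)
    rw [hval, ← h3, h1.1]
  · intro t ht
    have htm : t < tm := by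
      have h1 : 1 - tm ≤ max 1 (max (tp + 1) (1 - tm)) := le_trans (le_max_right _ _) (le_max_right _ _)
      linarith
    have hval : cyclicNm n (x t) = sSup Sm := hback t htm.le
    refine ⟨?_, hval⟩
    obtain ⟨ε, hε0, hεP⟩ := left_local hsol hnontriv t
    have h1 := hεP ε hε0 (le_refl ε)
    have h3 : cyclicNm n (x (t - ε)) = sSup Sm := hback (t - ε) (by linarith)
    show cyclicNm n (x t) = cyclicNM n (x t)
    rw [hval, ← h3, h1.1]
end
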